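/- arXiv:2512.18936 — 6 statements merged into one kernel-verified Lean document; each statement's English description precedes it below -/
import Mathlib

section
/- For every s with Re s > 1, each of the three families ((1−p^{−s})^{−z})_p, ((1−p^{−2s})^{−w})_p and (G_p(s))_p (indexed by primes p) is multipliable, and ∑_{n≥1} 𝔣(n) n^{−s} = (∏_p (1−p^{−s})^{−z}) · (∏_p (1−p^{−2s})^{−w}) · (∏_p G_p(s)), where all complex powers are taken with the principal branch. -/
open Complex

private lemma fakeMu_norm_lt_one (p : Nat.Primes) {t : ℂ} (ht : 1 < t.re) :
    ‖((p : ℕ) : ℂ) ^ (-t)‖ < 1 := by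
  rw [Complex.norm_natCast_cpow_of_pos p.prop.pos]
  have h2 : (2 : ℝ) ≤ ((p : ℕ) : ℝ) := by exact_mod_cast p.prop.two_le
  have : ((p : ℕ) : ℝ) ^ (-t).re ≤ ((p : ℕ) : ℝ) ^ (-1 : ℝ) :=
    Real.rpow_le_rpow_of_exponent_le (by linarith) (by simp only [neg_re]; linarith)
  calc ((p : ℕ) : ℝ) ^ (-t).re ≤ ((p : ℕ) : ℝ) ^ (-1 : ℝ) := this
    _ < 1 := by
        rw [Real.rpow_neg_one]
        rw [inv_lt_one_iff₀]; right; linarith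

private lemma fakeMu_base_ne_zero (p : Nat.Primes) {t : ℂ} (ht : 1 < t.re) :
    1 - ((p : ℕ) : ℂ) ^ (-t) ≠ 0 := by
  intro h
  have := fakeMu_norm_lt_one p ht
  rw [show ((p : ℕ) : ℂ) ^ (-t) = 1 from (sub_eq_zero.mp h).symm, norm_one] at this
  exact lt_irrefl _ this

private lemma fakeMu_summable (t : ℂ) (ht : 1 < t.re) :
    Summable (fun p : Nat.Primes => ((p : ℕ) : ℂ) ^ (-t)) := by
  apply Summable.of_norm
  have : (fun p : Nat.Primes => ‖((p : ℕ) : ℂ) ^ (-t)‖)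
      = fun p : Nat.Primes => ((p : ℕ) : ℝ) ^ (-t.re) := by
    funext p
    rw [Complex.norm_natCast_cpow_of_pos p.prop.pos, neg_re]
  rw [this]
  exact Nat.Primes.summable_rpow.mpr (by linarith)

private lemma fakeMu_multipliable_cpow (t c : ℂ) (ht : 1 < t.re) :
    Multipliable (fun p : Nat.Primes => (1 - ((p : ℕ) : ℂ) ^ (-t)) ^ c) := by
  have hlog : Summable (fun p : Nat.Primes => Complex.log (1 - ((p : ℕ) : ℂ) ^ (-t)) * c) :=
    ((fakeMu_summable t ht).clog_one_sub).mul_right c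
  refine hlog.hasSum.cexp.multipliable.congr fun p => ?_
  simp only [Function.comp_apply]
  exact (Complex.cpow_def_of_ne_zero (fakeMu_base_ne_zero p ht) c).symm

/-- For `Re s > 1`, the families `((1−p^{−s})^{−z})_p`,
`((1−p^{−2s})^{−w})_p` and `(G_p(s))_p` are multipliable, and the Dirichlet series of
`𝔣` factors as the product of the three Euler products. -/
theorem fakeMu_canonical_factorization
    (ε : ℕ → ℂ) (hε0 : ε 0 = 1)
    (hε : ∀ k, 1 ≤ k → ‖ε k‖ = 1 ∨ ε k = 0)
    (z w : ℂ) (hz : z = ε 1) (hw : w = ε 2 - ε 1 * (ε 1 + 1) / 2)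
    (f : ℕ → ℂ) (hf0 : f 0 = 0)
    (hf : ∀ n : ℕ, n ≠ 0 → f n = ∏ p ∈ n.primeFactors, ε (n.factorization p))
    (Gp : Nat.Primes → ℂ → ℂ)
    (hGp : ∀ (p : Nat.Primes) (s : ℂ),
      Gp p s = (1 - ((p : ℕ) : ℂ) ^ (-s)) ^ z * (1 - ((p : ℕ) : ℂ) ^ (-(2 * s))) ^ w *
        (∑' k : ℕ, ε k * (((p : ℕ) : ℂ) ^ (-s)) ^ k))
    (s : ℂ) (hs : 1 < s.re) :
    Multipliable (fun p : Nat.Primes => (1 - ((p : ℕ) : ℂ) ^ (-s)) ^ (-z)) ∧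
    Multipliable (fun p : Nat.Primes => (1 - ((p : ℕ) : ℂ) ^ (-(2 * s))) ^ (-w)) ∧
    Multipliable (fun p : Nat.Primes => Gp p s) ∧
    ∑' n : ℕ, f n * (n : ℂ) ^ (-s)
      = (∏' p : Nat.Primes, (1 - ((p : ℕ) : ℂ) ^ (-s)) ^ (-z)) *
        (∏' p : Nat.Primes, (1 - ((p : ℕ) : ℂ) ^ (-(2 * s))) ^ (-w)) *
        (∏' p : Nat.Primes, Gp p s) := by
  have h2s : 1 < (2 * s).re := by
    rw [mul_re]; simp only [re_ofNat, im_ofNat]; nlinarith [hs]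
  -- the function n ↦ f n * n^{-s}
  set F : ℕ → ℂ := fun n => f n * (n : ℂ) ^ (-s) with hF
  have hεle : ∀ k, ‖ε k‖ ≤ 1 := by
    intro k
    cases k with
    | zero => rw [hε0, norm_one]
    | succ m =>
      rcases hε (m + 1) (Nat.le_add_left 1 m) with h | h
      · rw [h]
      · rw [h, norm_zero]; norm_num
  have hf1 : f 1 = 1 := by
    rw [hf 1 one_ne_zero]
    simp
  have hF1 : F 1 = 1 := by simp [hF, hf1]
  have hF0 : F 0 = 0 := by simp [hF, hf0]
  have hfmul : ∀ {m n : ℕ}, m ≠ 0 → n ≠ 0 → Nat.Coprime m n → f (m * n) = f m * f n := by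
    intro m n hm hn hmn
    rw [hf _ (mul_ne_zero hm hn), hf m hm, hf n hn, hmn.primeFactors_mul,
      Finset.prod_union (Nat.Coprime.disjoint_primeFactors hmn)]
    congr 1
    · refine Finset.prod_congr rfl fun p hp => ?_
      rw [Nat.factorization_mul hm hn]
      have : n.factorization p = 0 :=
        Nat.factorization_eq_zero_of_not_dvd fun hd =>
          (Nat.Prime.one_lt (Nat.prime_of_mem_primeFactors hp)).ne'
            (Nat.eq_one_of_dvd_coprimes hmn (Nat.dvd_of_mem_primeFactors hp) hd)
      simp [this]
    · refine Finset.prod_congr rfl fun p hp => ?_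
      rw [Nat.factorization_mul hm hn]
      have : m.factorization p = 0 :=
        Nat.factorization_eq_zero_of_not_dvd fun hd =>
          (Nat.Prime.one_lt (Nat.prime_of_mem_primeFactors hp)).ne'
            (Nat.eq_one_of_dvd_coprimes hmn hd (Nat.dvd_of_mem_primeFactors hp))
      simp [this]
  have hFmul : ∀ {m n : ℕ}, Nat.Coprime m n → F (m * n) = F m * F n := by
    intro m n hmn
    rcases eq_or_ne m 0 with rfl | hm
    · have hn1 : n = 1 := by simpa using hmn
      subst hn1; simp [hF, hf0]
    rcases eq_or_ne n 0 with rfl | hn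
    · have hm1 : m = 1 := by simpa [Nat.coprime_zero_right] using hmn
      subst hm1; simp [hF, hf0]
    simp only [hF]
    rw [hfmul hm hn hmn, Nat.cast_mul, Complex.natCast_mul_natCast_cpow]
    ring
  have hFsum : Summable (fun n => ‖F n‖) := by
    have hb : Summable (fun n : ℕ => ((n : ℝ)) ^ (-s.re)) :=
      Real.summable_nat_rpow.mpr (by linarith)
    refine Summable.of_nonneg_of_le (fun n => norm_nonneg _) (fun n => ?_) hb
    rcases eq_or_ne n 0 with rfl | hn
    · rw [show ‖F 0‖ = 0 by simp [hF, hf0]]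
      positivity
    have hnorm : ‖(n : ℂ) ^ (-s)‖ = (n : ℝ) ^ (-s.re) := by
      rw [Complex.norm_natCast_cpow_of_pos (Nat.pos_of_ne_zero hn), neg_re]
    have hfle : ‖f n‖ ≤ 1 := by
      rw [hf n hn]
      calc ‖∏ p ∈ n.primeFactors, ε (n.factorization p)‖
          = ∏ p ∈ n.primeFactors, ‖ε (n.factorization p)‖ := norm_prod _ _
        _ ≤ ∏ p ∈ n.primeFactors, 1 :=
            Finset.prod_le_prod (fun _ _ => norm_nonneg _) (fun p _ => hεle _)
        _ = 1 := Finset.prod_const_one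
    calc ‖F n‖ = ‖f n‖ * ‖(n : ℂ) ^ (-s)‖ := norm_mul _ _
      _ ≤ 1 * ((n : ℝ) ^ (-s.re)) := by
          rw [hnorm]
          exact mul_le_mul_of_nonneg_right hfle (Real.rpow_nonneg n.cast_nonneg _)
      _ = (n : ℝ) ^ (-s.re) := one_mul _
  -- the Euler product for F
  have hEuler : HasProd (fun p : Nat.Primes => ∑' e : ℕ, F ((p : ℕ) ^ e)) (∑' n, F n) :=
    EulerProduct.eulerProduct_hasProd hF1 hFmul hFsum hF0
  -- identify the local factors with the generating series
  have hlocal : ∀ p : Nat.Primes,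
      (∑' e : ℕ, F ((p : ℕ) ^ e)) = ∑' k : ℕ, ε k * (((p : ℕ) : ℂ) ^ (-s)) ^ k := by
    intro p
    refine tsum_congr fun e => ?_
    have hcast : ((((p : ℕ) ^ e : ℕ)) : ℂ) ^ (-s) = (((p : ℕ) : ℂ) ^ (-s)) ^ e := by
      push_cast
      rw [← Complex.cpow_nat_mul' (x := ((p : ℕ) : ℂ)) (n := e)
        (by rw [Complex.natCast_arg]; simpa using Real.pi_pos)
        (by rw [Complex.natCast_arg]; simpa using Real.pi_pos.le),
        Complex.cpow_nat_mul]
    have hfpe : f ((p : ℕ) ^ e) = ε e := by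
      cases e with
      | zero => simpa [hε0] using hf1
      | succ m =>
        rw [hf _ (pow_ne_zero _ p.prop.pos.ne'),
          Nat.primeFactors_prime_pow (Nat.succ_ne_zero m) p.prop]
        rw [Finset.prod_singleton, Nat.Prime.factorization_pow p.prop, Finsupp.single_eq_same]
    simp only [hF]
    rw [hfpe, hcast]
  have hg : HasProd (fun p : Nat.Primes => ∑' k : ℕ, ε k * (((p : ℕ) : ℂ) ^ (-s)) ^ k)
      (∑' n, F n) := by
    exact funext hlocal ▸ hEuler
  -- the three multipliability statements
  have hA : Multipliable (fun p : Nat.Primes => (1 - ((p : ℕ) : ℂ) ^ (-s)) ^ (-z)) :=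
    fakeMu_multipliable_cpow s (-z) hs
  have hB : Multipliable (fun p : Nat.Primes => (1 - ((p : ℕ) : ℂ) ^ (-(2 * s))) ^ (-w)) :=
    fakeMu_multipliable_cpow (2 * s) (-w) h2s
  have hA' : Multipliable (fun p : Nat.Primes => (1 - ((p : ℕ) : ℂ) ^ (-s)) ^ z) :=
    fakeMu_multipliable_cpow s z hs
  have hB' : Multipliable (fun p : Nat.Primes => (1 - ((p : ℕ) : ℂ) ^ (-(2 * s))) ^ w) :=
    fakeMu_multipliable_cpow (2 * s) w h2s
  have hGmult : Multipliable (fun p : Nat.Primes => Gp p s) := by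
    refine ((hA'.mul hB').mul hg.multipliable).congr fun p => ?_
    rw [hGp p s]
  refine ⟨hA, hB, hGmult, ?_⟩
  -- combine the products
  rw [← Multipliable.tprod_mul hA hB, ← Multipliable.tprod_mul (hA.mul hB) hGmult]
  rw [← hg.tprod_eq]
  refine (tprod_congr fun p => ?_).symm
  rw [hGp p s, Complex.cpow_neg _ z, Complex.cpow_neg _ w]
  have h1 : (1 - ((p : ℕ) : ℂ) ^ (-s)) ^ z ≠ 0 := by
    rw [Ne, Complex.cpow_eq_zero_iff]
    exact fun h => fakeMu_base_ne_zero p hs h.1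
  have h2 : (1 - ((p : ℕ) : ℂ) ^ (-(2 * s))) ^ w ≠ 0 := by
    rw [Ne, Complex.cpow_eq_zero_iff]
    exact fun h => fakeMu_base_ne_zero p h2s h.1
  set A := (1 - ((p : ℕ) : ℂ) ^ (-s)) ^ z
  set B := (1 - ((p : ℕ) : ℂ) ^ (-(2 * s))) ^ w
  set G := ∑' k : ℕ, ε k * (((p : ℕ) : ℂ) ^ (-s)) ^ k
  rw [show A⁻¹ * B⁻¹ * (A * B * G) = (A⁻¹ * A) * ((B⁻¹ * B) * G) by ring,
    inv_mul_cancel₀ h1, inv_mul_cancel₀ h2, one_mul, one_mul]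
end

section
/- Let ε₁, ε₂ ∈ ℂ each satisfy |ε| = 1 or ε = 0, and set w := ε₂ − ε₁(ε₁+1)/2. Then −2 ≤ Re w ≤ 25/16. Moreover both bounds are attained: Re w = −2 when ε₁ = 1 and ε₂ = −1, and Re w = 25/16 when ε₂ = 1 and ε₁ = e^{iθ} with cos θ = −1/4. -/
/-- If `ε₁, ε₂` each lie on the unit circle or vanish and
`w := ε₂ − ε₁(ε₁+1)/2`, then `−2 ≤ Re w ≤ 25/16`; both bounds are attained:
at `ε₁ = 1, ε₂ = −1` one gets `Re w = −2`, and at `ε₂ = 1, ε₁ = e^{iθ}` with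
`cos θ = −1/4` one gets `Re w = 25/16`. -/
theorem fakeMu_w_range
    (ε₁ ε₂ : ℂ) (h1 : ‖ε₁‖ = 1 ∨ ε₁ = 0) (h2 : ‖ε₂‖ = 1 ∨ ε₂ = 0) :
    (-2 ≤ (ε₂ - ε₁ * (ε₁ + 1) / 2).re ∧ (ε₂ - ε₁ * (ε₁ + 1) / 2).re ≤ 25 / 16) ∧
    ((-1 : ℂ) - (1 : ℂ) * ((1 : ℂ) + 1) / 2).re = -2 ∧
    (∀ θ : ℝ, Real.cos θ = -(1 / 4) →
      ((1 : ℂ) - Complex.exp (θ * Complex.I) *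
        (Complex.exp (θ * Complex.I) + 1) / 2).re = 25 / 16) := by
  refine ⟨?_, by norm_num, ?_⟩
  · -- main bounds
    have hsq1 : ε₁.re ^ 2 + ε₁.im ^ 2 = 1 ∨ (ε₁.re = 0 ∧ ε₁.im = 0) := by
      rcases h1 with h | h
      · left
        have := Complex.sq_norm ε₁
        rw [Complex.normSq_apply] at this
        rw [h] at this
        nlinarith [this]
      · right; simp [h]
    have h2re : -1 ≤ ε₂.re ∧ ε₂.re ≤ 1 := by
      rcases h2 with h | h
      · have := Complex.abs_re_le_norm ε₂
        rw [h] at this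
        constructor <;> [linarith [neg_abs_le ε₂.re]; linarith [le_abs_self ε₂.re]]
      · simp [h]
    have hre : (ε₂ - ε₁ * (ε₁ + 1) / 2).re =
        ε₂.re - (ε₁.re ^ 2 - ε₁.im ^ 2 + ε₁.re) / 2 := by
      simp [Complex.div_re, Complex.mul_re, Complex.add_re, Complex.sub_re,
        Complex.add_im, Complex.mul_im, Complex.normSq_apply]
      ring
    rw [hre]
    rcases hsq1 with h | ⟨hx, hy⟩
    · constructor <;> nlinarith [h2re.1, h2re.2, sq_nonneg (ε₁.re - 1), sq_nonneg (ε₁.re + 1/4)]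
    · rw [hx, hy]; constructor <;> nlinarith [h2re.1, h2re.2]
  · intro θ hθ
    have he : Complex.exp (θ * Complex.I) = ⟨Real.cos θ, Real.sin θ⟩ := by
      rw [Complex.exp_mul_I]
      simp [Complex.ext_iff, Complex.cos_ofReal_re, Complex.sin_ofReal_re]
    have hs : Real.sin θ ^ 2 = 1 - Real.cos θ ^ 2 := by
      have := Real.sin_sq_add_cos_sq θ; linarith
    rw [he]
    simp only [Complex.div_re, Complex.mul_re, Complex.mul_im, Complex.add_re,
      Complex.add_im, Complex.sub_re, Complex.one_re, Complex.normSq_apply]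
    norm_num
    nlinarith [hs, hθ]
end

section
/- Let f : ℕ → ℂ satisfy |f(n)| ≤ 1 for all n ≥ 1, and let F(s) := ∑_{n≥1} f(n) n^{−s} (absolutely convergent for Re s > 1). Then for every c > 1 and every x > 0, the function t ↦ F(c+it) Γ(c+it) x^{c+it} is absolutely integrable on ℝ and ∑_{n≥1} f(n) e^{−n/x} = (1/(2π)) ∫_{−∞}^{∞} F(c+it) Γ(c+it) x^{c+it} dt, where Γ is the complex Gamma function and x^{c+it} := e^{(c+it) log x}. -/
open MeasureTheory

namespace SmoothedPerronAux

open Complex Set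

lemma norm_Gamma_le {s : ℂ} (hs : 0 < s.re) : ‖Complex.Gamma s‖ ≤ Real.Gamma s.re := by
  rw [Complex.Gamma_eq_integral hs, Complex.GammaIntegral, Real.Gamma_eq_integral hs]
  refine (norm_integral_le_integral_norm _).trans_eq ?_
  refine setIntegral_congr_fun measurableSet_Ioi fun u hu => ?_
  rw [norm_mul, Complex.norm_cpow_eq_rpow_re_of_pos hu, Complex.norm_real, Real.norm_eq_abs,
    abs_of_pos (Real.exp_pos _)]
  simp

lemma Gamma_vert_bound {c : ℝ} (hc : 1 < c) (t : ℝ) :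
    ‖Complex.Gamma ((c : ℂ) + (t : ℂ) * Complex.I)‖
      ≤ 2 * Real.Gamma (c + 2) / (1 + t ^ 2) := by
  set s : ℂ := (c : ℂ) + (t : ℂ) * Complex.I with hs
  have hre : s.re = c := by simp [hs]
  have him : s.im = t := by simp [hs]
  have hs0 : s ≠ 0 := fun h => by simp [h] at hre; linarith
  have hs1 : s + 1 ≠ 0 := fun h => by
    have : (s + 1).re = 0 := by rw [h]; simp
    simp [hre] at this; linarith
  have key : Complex.Gamma (s + 2) = (s + 1) * (s * Complex.Gamma s) := by
    have h1 := Complex.Gamma_add_one (s + 1) hs1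
    have h2 := Complex.Gamma_add_one s hs0
    rw [show s + 2 = s + 1 + 1 by ring, h1, h2]
  have hnorm2 : ‖Complex.Gamma (s + 2)‖ ≤ Real.Gamma (c + 2) := by
    have h0 : (s + 2).re = c + 2 := by simp [hre]
    have h := norm_Gamma_le (s := s + 2) (by rw [h0]; linarith)
    rwa [h0] at h
  have hlow : (1 + t ^ 2) / 2 ≤ ‖s + 1‖ * ‖s‖ := by
    have h1 : |t| ≤ ‖s‖ := by simpa [him] using Complex.abs_im_le_norm s
    have h2 : |t| ≤ ‖s + 1‖ := by
      have : (s + 1).im = t := by simp [him]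
      simpa [this] using Complex.abs_im_le_norm (s + 1)
    have h3 : (1 : ℝ) ≤ ‖s‖ := by
      have := Complex.abs_re_le_norm s
      rw [hre] at this
      calc (1 : ℝ) ≤ c := hc.le
        _ ≤ |c| := le_abs_self c
        _ ≤ ‖s‖ := this
    have h4 : (1 : ℝ) ≤ ‖s + 1‖ := by
      have := Complex.abs_re_le_norm (s + 1)
      have hre1 : (s + 1).re = c + 1 := by simp [hre]
      rw [hre1] at this
      calc (1 : ℝ) ≤ c + 1 := by linarith
        _ ≤ |c + 1| := le_abs_self _
        _ ≤ ‖s + 1‖ := this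
    rcases le_total (|t|) 1 with h | h
    · have : t ^ 2 ≤ 1 := by nlinarith [abs_nonneg t, _root_.sq_abs t]
      nlinarith
    · have : 1 ≤ t ^ 2 := by nlinarith [_root_.sq_abs t]
      nlinarith [abs_nonneg t, _root_.sq_abs t]
  have hpos : 0 < 1 + t ^ 2 := by positivity
  have hG : ‖Complex.Gamma s‖ * ((1 + t ^ 2) / 2) ≤ Real.Gamma (c + 2) := by
    calc ‖Complex.Gamma s‖ * ((1 + t ^ 2) / 2)
        ≤ ‖Complex.Gamma s‖ * (‖s + 1‖ * ‖s‖) :=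
          mul_le_mul_of_nonneg_left hlow (norm_nonneg _)
      _ = ‖(s + 1) * (s * Complex.Gamma s)‖ := by rw [norm_mul, norm_mul]; ring
      _ = ‖Complex.Gamma (s + 2)‖ := by rw [key]
      _ ≤ Real.Gamma (c + 2) := hnorm2
  rw [le_div_iff₀ hpos]
  nlinarith [norm_nonneg (Complex.Gamma s)]

lemma cont_Gamma_line {c : ℝ} (hc : 0 < c) :
    Continuous (fun t : ℝ => Complex.Gamma ((c : ℂ) + (t : ℂ) * Complex.I)) := by
  rw [continuous_iff_continuousAt]
  intro t
  have h : DifferentiableAt ℂ Complex.Gamma ((c : ℂ) + (t : ℂ) * Complex.I) := by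
    apply Complex.differentiableAt_Gamma
    intro m hm
    have h0 : ((c : ℂ) + (t : ℂ) * Complex.I).re = c := by simp
    rw [hm] at h0
    simp at h0
    have : (0 : ℝ) ≤ m := Nat.cast_nonneg m
    linarith
  have hline : Continuous fun t : ℝ => (c : ℂ) + (t : ℂ) * Complex.I := by fun_prop
  show ContinuousAt (Complex.Gamma ∘ fun t : ℝ => (c : ℂ) + (t : ℂ) * Complex.I) t
  exact ContinuousAt.comp (g := Complex.Gamma)
    (f := fun t : ℝ => (c : ℂ) + (t : ℂ) * Complex.I) h.continuousAt hline.continuousAt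

lemma mellin_exp {s : ℂ} (hs : 0 < s.re) :
    mellin (fun t : ℝ => (Real.exp (-t) : ℂ)) s = Complex.Gamma s := by
  rw [Complex.Gamma_eq_integral hs, Complex.GammaIntegral, mellin]
  simp_rw [smul_eq_mul, mul_comm]

lemma Gamma_line_integrable {c : ℝ} (hc : 1 < c) :
    Integrable (fun t : ℝ => Complex.Gamma ((c : ℂ) + (t : ℂ) * Complex.I)) := by
  refine Integrable.mono' ((integrable_inv_one_add_sq).const_mul (2 * Real.Gamma (c + 2)))
    ((cont_Gamma_line (by linarith)).aestronglyMeasurable) ?_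
  filter_upwards with t
  simpa [div_eq_mul_inv] using Gamma_vert_bound hc t

lemma cpow_split {n : ℕ} {x : ℝ} (hx : 0 < x) (s : ℂ) :
    (((n : ℝ) / x : ℝ) : ℂ) ^ (-s) = (n : ℂ) ^ (-s) * (x : ℂ) ^ s := by
  have harg : (x : ℂ).arg ≠ Real.pi := by
    rw [Complex.arg_ofReal_of_nonneg hx.le]
    exact Real.pi_ne_zero.symm
  have h1 : ((n : ℝ) / x : ℝ) = (n : ℝ) * x⁻¹ := by ring
  rw [h1, Complex.ofReal_mul,
    Complex.mul_cpow_ofReal_nonneg (Nat.cast_nonneg n) (inv_nonneg.mpr hx.le),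
    Complex.ofReal_inv, Complex.inv_cpow _ _ harg, ← Complex.cpow_neg, neg_neg]
  norm_cast

lemma exp_point_inversion {c : ℝ} (hc : 1 < c) {x : ℝ} (hx : 0 < x) {n : ℕ} (hn : 1 ≤ n) :
    ∫ t : ℝ, (n : ℂ) ^ (-((c : ℂ) + (t : ℂ) * Complex.I)) *
        (Complex.Gamma ((c : ℂ) + (t : ℂ) * Complex.I) *
          (x : ℂ) ^ ((c : ℂ) + (t : ℂ) * Complex.I))
      = 2 * Real.pi * Complex.exp (-((n : ℂ) / (x : ℂ))) := by
  set E : ℝ → ℂ := fun t => (Real.exp (-t) : ℂ) with hE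
  have ha : (0 : ℝ) < (n : ℝ) / x := by
    have : (0:ℝ) < (n:ℝ) := by exact_mod_cast hn
    positivity
  have hconv : MellinConvergent E (c : ℂ) := by
    have haux := Complex.GammaIntegral_convergent (s := (c : ℂ)) (by simp; linarith)
    refine haux.congr_fun (fun t ht => ?_) measurableSet_Ioi
    simp [hE, smul_eq_mul, mul_comm]
  have hvert : Complex.VerticalIntegrable (mellin E) c := by
    refine (Gamma_line_integrable hc).congr ?_
    filter_upwards with t
    exact (mellin_exp (s := (c : ℂ) + (t : ℂ) * Complex.I) (by simp; linarith)).symm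
  have hcont : ContinuousAt E ((n : ℝ) / x) := by fun_prop
  have hinv := mellinInv_mellin_eq c E ha hconv hvert hcont
  rw [mellinInv] at hinv
  have hrw : (∫ y : ℝ, ((((n : ℝ) / x : ℝ)) : ℂ) ^ (-((c : ℂ) + (y : ℂ) * Complex.I)) •
        mellin E ((c : ℂ) + (y : ℂ) * Complex.I))
      = ∫ t : ℝ, (n : ℂ) ^ (-((c : ℂ) + (t : ℂ) * Complex.I)) *
          (Complex.Gamma ((c : ℂ) + (t : ℂ) * Complex.I) *
            (x : ℂ) ^ ((c : ℂ) + (t : ℂ) * Complex.I)) := by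
    refine integral_congr_ae (Filter.Eventually.of_forall fun t => ?_)
    simp only [smul_eq_mul]
    rw [mellin_exp (by simp; linarith), cpow_split hx]
    ring
  rw [hrw] at hinv
  have hEval : E ((n : ℝ) / x) = Complex.exp (-((n : ℂ) / (x : ℂ))) := by
    simp only [hE, ← Complex.ofReal_exp]
    push_cast
    ring_nf
  rw [hEval] at hinv
  rw [← hinv, Complex.real_smul]
  have hπ : (Real.pi : ℂ) ≠ 0 := by exact_mod_cast Real.pi_ne_zero
  push_cast
  field_simp
  simp only [mul_comm Complex.I]

end SmoothedPerronAux

open SmoothedPerronAux in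
/-- Smoothed Perron formula with exponential kernel: for a bounded
arithmetic function `f`, `c > 1` and `x > 0`, the integrand `F(c+it)Γ(c+it)x^{c+it}`
is absolutely integrable in `t` and
`∑_{n≥1} f(n) e^{−n/x} = (1/2π) ∫_ℝ F(c+it) Γ(c+it) x^{c+it} dt`. -/
theorem smoothed_perron_exponential
    (f : ℕ → ℂ) (hf0 : f 0 = 0) (hf : ∀ n : ℕ, 1 ≤ n → ‖f n‖ ≤ 1)
    (F : ℂ → ℂ) (hF : ∀ s : ℂ, 1 < s.re → F s = ∑' n : ℕ, f n * (n : ℂ) ^ (-s))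
    (c : ℝ) (hc : 1 < c) (x : ℝ) (hx : 0 < x) :
    Integrable (fun t : ℝ =>
      F ((c : ℂ) + (t : ℂ) * Complex.I) * Complex.Gamma ((c : ℂ) + (t : ℂ) * Complex.I) *
        (x : ℂ) ^ ((c : ℂ) + (t : ℂ) * Complex.I)) ∧
    ∑' n : ℕ, f n * Complex.exp (-((n : ℂ) / (x : ℂ)))
      = (1 / (2 * (Real.pi : ℂ))) *
        ∫ t : ℝ, F ((c : ℂ) + (t : ℂ) * Complex.I) *
          Complex.Gamma ((c : ℂ) + (t : ℂ) * Complex.I) *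
          (x : ℂ) ^ ((c : ℂ) + (t : ℂ) * Complex.I) := by
  have hre : ∀ t : ℝ, ((c : ℂ) + (t : ℂ) * Complex.I).re = c := fun t => by simp
  set u : ℕ → ℝ := fun n => (n : ℝ) ^ (-c) with hu
  have husum : Summable u := Real.summable_nat_rpow.mpr (by linarith)
  have hunonneg : ∀ n, 0 ≤ u n := fun n => Real.rpow_nonneg (Nat.cast_nonneg n) _
  have hterm_norm : ∀ (n : ℕ) (t : ℝ),
      ‖f n * (n : ℂ) ^ (-((c : ℂ) + (t : ℂ) * Complex.I))‖ ≤ u n := by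
    intro n t
    rcases Nat.eq_zero_or_pos n with rfl | hn
    · simpa [hf0] using hunonneg 0
    · have hn0 : (0 : ℝ) < n := by exact_mod_cast hn
      rw [norm_mul]
      have hnorm : ‖(n : ℂ) ^ (-((c : ℂ) + (t : ℂ) * Complex.I))‖ = (n : ℝ) ^ (-c) := by
        rw [show ((n : ℕ) : ℂ) = (((n : ℝ)) : ℂ) by push_cast; rfl,
          Complex.norm_cpow_eq_rpow_re_of_pos hn0]
        congr 1
        simp
      rw [hnorm]
      calc ‖f n‖ * (n : ℝ) ^ (-c) ≤ 1 * (n : ℝ) ^ (-c) := by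
            gcongr
            exact hf n hn
        _ = u n := by rw [one_mul]
  have htermcont : ∀ n : ℕ,
      Continuous fun t : ℝ => f n * (n : ℂ) ^ (-((c : ℂ) + (t : ℂ) * Complex.I)) := by
    intro n
    rcases Nat.eq_zero_or_pos n with rfl | hn
    · simpa [hf0] using continuous_const
    · have hn0 : (n : ℂ) ≠ 0 := Nat.cast_ne_zero.mpr hn.ne'
      exact continuous_const.mul (Continuous.const_cpow (by fun_prop) (Or.inl hn0))
  have hFeq : ∀ t : ℝ, F ((c : ℂ) + (t : ℂ) * Complex.I)
      = ∑' n : ℕ, f n * (n : ℂ) ^ (-((c : ℂ) + (t : ℂ) * Complex.I)) :=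
    fun t => hF _ (by rw [hre]; exact hc)
  have hFcont : Continuous fun t : ℝ => F ((c : ℂ) + (t : ℂ) * Complex.I) :=
    (continuous_tsum htermcont husum fun n t => hterm_norm n t).congr fun t => (hFeq t).symm
  set C : ℝ := ∑' n, u n with hC
  have hC0 : 0 ≤ C := tsum_nonneg hunonneg
  have hFbound : ∀ t : ℝ, ‖F ((c : ℂ) + (t : ℂ) * Complex.I)‖ ≤ C := fun t => by
    rw [hFeq t]
    exact tsum_of_norm_bounded husum.hasSum fun n => hterm_norm n t
  have hxnorm : ∀ t : ℝ, ‖(x : ℂ) ^ ((c : ℂ) + (t : ℂ) * Complex.I)‖ = x ^ c := fun t => by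
    rw [Complex.norm_cpow_eq_rpow_re_of_pos hx, hre]
  have hxc0 : 0 ≤ x ^ c := Real.rpow_nonneg hx.le c
  have hG0 : 0 ≤ Real.Gamma (c + 2) := (Real.Gamma_pos_of_pos (by linarith)).le
  have hxcont : Continuous fun t : ℝ => (x : ℂ) ^ ((c : ℂ) + (t : ℂ) * Complex.I) :=
    Continuous.const_cpow (by fun_prop) (Or.inl (Complex.ofReal_ne_zero.mpr hx.ne'))
  have hGcont := cont_Gamma_line (c := c) (by linarith)
  have hint : Integrable (fun t : ℝ =>
      F ((c : ℂ) + (t : ℂ) * Complex.I) * Complex.Gamma ((c : ℂ) + (t : ℂ) * Complex.I) *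
        (x : ℂ) ^ ((c : ℂ) + (t : ℂ) * Complex.I)) := by
    refine Integrable.mono'
      ((integrable_inv_one_add_sq).const_mul (C * (2 * Real.Gamma (c + 2)) * x ^ c))
      (((hFcont.mul hGcont).mul hxcont).aestronglyMeasurable) ?_
    filter_upwards with t
    rw [norm_mul, norm_mul, hxnorm]
    have h1 : (0:ℝ) < 1 + t ^ 2 := by positivity
    calc ‖F ((c : ℂ) + (t : ℂ) * Complex.I)‖ *
          ‖Complex.Gamma ((c : ℂ) + (t : ℂ) * Complex.I)‖ * x ^ c
        ≤ C * (2 * Real.Gamma (c + 2) / (1 + t ^ 2)) * x ^ c := by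
          gcongr
          · exact hFbound t
          · exact Gamma_vert_bound hc t
      _ = C * (2 * Real.Gamma (c + 2)) * x ^ c * (1 + t ^ 2)⁻¹ := by
          field_simp
  refine ⟨hint, ?_⟩
  set g : ℕ → ℝ → ℂ := fun n t => f n * ((n : ℂ) ^ (-((c : ℂ) + (t : ℂ) * Complex.I)) *
      (Complex.Gamma ((c : ℂ) + (t : ℂ) * Complex.I) *
        (x : ℂ) ^ ((c : ℂ) + (t : ℂ) * Complex.I))) with hg
  have hgcont : ∀ n : ℕ, Continuous (g n) := by
    intro n
    rcases Nat.eq_zero_or_pos n with rfl | hn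
    · simpa [hg, hf0] using continuous_const
    · have hn0 : (n : ℂ) ≠ 0 := Nat.cast_ne_zero.mpr hn.ne'
      exact continuous_const.mul ((Continuous.const_cpow (by fun_prop) (Or.inl hn0)).mul
        (hGcont.mul hxcont))
  have hgbound : ∀ (n : ℕ) (t : ℝ),
      ‖g n t‖ ≤ u n * (2 * Real.Gamma (c + 2)) * x ^ c * (1 + t ^ 2)⁻¹ := by
    intro n t
    have h1 : (0:ℝ) < 1 + t ^ 2 := by positivity
    have heq : ‖g n t‖ = ‖f n * (n : ℂ) ^ (-((c : ℂ) + (t : ℂ) * Complex.I))‖ *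
        ‖Complex.Gamma ((c : ℂ) + (t : ℂ) * Complex.I)‖ *
        ‖(x : ℂ) ^ ((c : ℂ) + (t : ℂ) * Complex.I)‖ := by
      simp only [hg, norm_mul]
      ring
    rw [heq, hxnorm]
    calc ‖f n * (n : ℂ) ^ (-((c : ℂ) + (t : ℂ) * Complex.I))‖ *
          ‖Complex.Gamma ((c : ℂ) + (t : ℂ) * Complex.I)‖ * x ^ c
        ≤ u n * (2 * Real.Gamma (c + 2) / (1 + t ^ 2)) * x ^ c := by
          gcongr
          · exact hterm_norm n t
          · exact Gamma_vert_bound hc t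
      _ = u n * (2 * Real.Gamma (c + 2)) * x ^ c * (1 + t ^ 2)⁻¹ := by
          field_simp
  have hB0 : (0:ℝ) ≤ ∫ t : ℝ, (1 + t ^ 2)⁻¹ := integral_nonneg fun t => by positivity
  have hlint : ∀ n : ℕ, (∫⁻ t : ℝ, ‖g n t‖₊)
      ≤ ENNReal.ofReal (u n * (2 * Real.Gamma (c + 2)) * x ^ c * ∫ t : ℝ, (1 + t ^ 2)⁻¹) := by
    intro n
    have hbint : Integrable (fun t : ℝ =>
        u n * (2 * Real.Gamma (c + 2)) * x ^ c * (1 + t ^ 2)⁻¹) :=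
      integrable_inv_one_add_sq.const_mul _
    calc (∫⁻ t : ℝ, ‖g n t‖₊)
        ≤ ∫⁻ t : ℝ, ENNReal.ofReal
            (u n * (2 * Real.Gamma (c + 2)) * x ^ c * (1 + t ^ 2)⁻¹) := by
          refine lintegral_mono fun t => ?_
          rw [← ENNReal.ofReal_coe_nnreal, coe_nnnorm]
          exact ENNReal.ofReal_le_ofReal (hgbound n t)
      _ = ENNReal.ofReal (∫ t : ℝ,
            u n * (2 * Real.Gamma (c + 2)) * x ^ c * (1 + t ^ 2)⁻¹) := by
          rw [ofReal_integral_eq_lintegral_ofReal hbint]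
          filter_upwards with t
          have h1 : (0:ℝ) < 1 + t ^ 2 := by positivity
          have := hunonneg n
          positivity
      _ = ENNReal.ofReal (u n * (2 * Real.Gamma (c + 2)) * x ^ c *
            ∫ t : ℝ, (1 + t ^ 2)⁻¹) := by
          rw [integral_const_mul]
  have hsum_fin : (∑' n : ℕ, ∫⁻ t : ℝ, ‖g n t‖₊) ≠ ⊤ := by
    have hsummable : Summable (fun n : ℕ =>
        u n * (2 * Real.Gamma (c + 2)) * x ^ c * ∫ t : ℝ, (1 + t ^ 2)⁻¹) :=
      ((husum.mul_right _).mul_right _).mul_right _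
    refine ne_top_of_le_ne_top ?_ (ENNReal.tsum_le_tsum fun n => hlint n)
    rw [← ENNReal.ofReal_tsum_of_nonneg (fun n => ?_) hsummable]
    · exact ENNReal.ofReal_ne_top
    · exact mul_nonneg (mul_nonneg (mul_nonneg (hunonneg n) (by positivity)) hxc0) hB0
  have hswap : ∫ t : ℝ, ∑' n : ℕ, g n t = ∑' n : ℕ, ∫ t : ℝ, g n t :=
    integral_tsum (fun n => (hgcont n).aestronglyMeasurable) hsum_fin
  have hint_n : ∀ n : ℕ,
      (∫ t : ℝ, g n t) = f n * (2 * Real.pi * Complex.exp (-((n : ℂ) / (x : ℂ)))) := by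
    intro n
    rcases Nat.eq_zero_or_pos n with rfl | hn
    · simp [hg, hf0]
    · simp only [hg]
      rw [integral_const_mul, exp_point_inversion hc hx hn]
  have hpt : ∀ t : ℝ, (∑' n : ℕ, g n t)
      = F ((c : ℂ) + (t : ℂ) * Complex.I) * Complex.Gamma ((c : ℂ) + (t : ℂ) * Complex.I) *
        (x : ℂ) ^ ((c : ℂ) + (t : ℂ) * Complex.I) := by
    intro t
    have hterm : ∀ n : ℕ, g n t = (f n * (n : ℂ) ^ (-((c : ℂ) + (t : ℂ) * Complex.I))) *
        (Complex.Gamma ((c : ℂ) + (t : ℂ) * Complex.I) *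
          (x : ℂ) ^ ((c : ℂ) + (t : ℂ) * Complex.I)) := fun n => by
      simp only [hg]; ring
    rw [tsum_congr hterm, tsum_mul_right, ← hFeq t]
    ring
  have hπ : (Real.pi : ℂ) ≠ 0 := by exact_mod_cast Real.pi_ne_zero
  calc ∑' n : ℕ, f n * Complex.exp (-((n : ℂ) / (x : ℂ)))
      = (1 / (2 * (Real.pi : ℂ))) * ∑' n : ℕ,
          (2 * (Real.pi : ℂ)) * (f n * Complex.exp (-((n : ℂ) / (x : ℂ)))) := by
        rw [tsum_mul_left]
        field_simp
    _ = (1 / (2 * (Real.pi : ℂ))) * ∑' n : ℕ, ∫ t : ℝ, g n t := by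
        congr 1
        refine tsum_congr fun n => ?_
        rw [hint_n n]
        push_cast
        ring
    _ = (1 / (2 * (Real.pi : ℂ))) * ∫ t : ℝ, ∑' n : ℕ, g n t := by rw [hswap]
    _ = _ := by
        congr 1
        refine integral_congr_ae (Filter.Eventually.of_forall fun t => ?_)
        exact hpt t
end

section
/- (Watson's lemma.) Let v > 0 and let K : (0,v) → ℂ be absolutely integrable. Suppose there exist s ∈ ℂ with Re s > −1, a number r ∈ (0,v], an integer M ≥ 0, and a function J : [0,r] → ℂ having M+1 continuous derivatives on [0,r], such that K(u) = u^s J(u) for all u ∈ (0,r) (with u^s := e^{s log u} for u > 0). Then for every L > 0 the integral Δ(L) := ∫_0^v e^{−Lu} K(u) du is finite, and there is a constant C such that for all L ≥ 1, |Δ(L) − ∑_{k=0}^{M} J^{(k)}(0) Γ(s+k+1) / (k! L^{s+k+1})| ≤ C L^{−Re s − M − 2}, where L^{s+k+1} := e^{(s+k+1) log L} and Γ is the Gamma function. -/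
open MeasureTheory Set

section helpers

lemma watson_aux_real_int {t : ℝ} (ht : -1 < t) {L : ℝ} (hL : 0 < L) :
    IntegrableOn (fun u : ℝ => u ^ t * Real.exp (-(L * u))) (Set.Ioi 0) := by
  have h0 : IntegrableOn (fun x : ℝ => Real.exp (-x) * x ^ t) (Set.Ioi 0) := by
    have := Real.GammaIntegral_convergent (s := t + 1) (by linarith)
    simpa using this
  have h1 : IntegrableOn (fun x : ℝ => Real.exp (-(L * x)) * (L * x) ^ t) (Set.Ioi 0) := by
    have := (integrableOn_Ioi_comp_mul_left_iff
      (fun x : ℝ => Real.exp (-x) * x ^ t) 0 hL).mpr (by rwa [mul_zero])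
    simpa using this
  have h2 : IntegrableOn (fun x : ℝ => (L ^ t)⁻¹ * (Real.exp (-(L * x)) * (L * x) ^ t)) (Set.Ioi 0) :=
    h1.const_mul ((L ^ t)⁻¹)
  refine h2.congr_fun (fun x hx => ?_) measurableSet_Ioi
  have hx0 : (0 : ℝ) < x := hx
  beta_reduce
  rw [Real.mul_rpow hL.le hx0.le]
  have hLt : L ^ t ≠ 0 := (Real.rpow_pos_of_pos hL t).ne'
  field_simp

lemma watson_aux_cplx_int {w : ℂ} (hw : -1 < w.re) {L : ℝ} (hL : 0 < L) :
    IntegrableOn (fun u : ℝ => (u : ℂ) ^ w * ((Real.exp (-(L * u)) : ℝ) : ℂ)) (Set.Ioi 0) := by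
  have hnorm : ∀ u ∈ Set.Ioi (0:ℝ),
      ‖(u : ℂ) ^ w * ((Real.exp (-(L * u)) : ℝ) : ℂ)‖ = u ^ w.re * Real.exp (-(L * u)) := by
    intro u hu
    have hu0 : (0:ℝ) < u := hu
    rw [norm_mul, Complex.norm_cpow_eq_rpow_re_of_pos hu0, Complex.norm_real, Real.norm_eq_abs,
      abs_of_pos (Real.exp_pos _)]
  refine Integrable.mono' (watson_aux_real_int hw hL) ?_ ?_
  · refine ContinuousOn.aestronglyMeasurable ?_ measurableSet_Ioi
    refine ContinuousOn.mul ?_ ?_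
    · intro x hx
      exact (Complex.continuousAt_ofReal_cpow_const x w (Or.inr (ne_of_gt hx))).continuousWithinAt
    · exact Complex.continuous_ofReal.comp
        (Real.continuous_exp.comp (continuous_const.mul continuous_id).neg) |>.continuousOn
  · rw [ae_restrict_iff' measurableSet_Ioi]
    filter_upwards with u
    intro hu
    exact le_of_eq (hnorm u hu)

lemma watson_aux_gamma {w : ℂ} (hw : -1 < w.re) {L : ℝ} (hL : 0 < L) :
    ∫ u in Set.Ioi (0:ℝ), (u : ℂ) ^ w * ((Real.exp (-(L * u)) : ℝ) : ℂ)
      = Complex.Gamma (w + 1) / (L : ℂ) ^ (w + 1) := by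
  have ha : 0 < (w + 1).re := by
    simp only [Complex.add_re, Complex.one_re]; linarith
  have := Complex.integral_cpow_mul_exp_neg_mul_Ioi ha hL
  have heq : ∫ u in Set.Ioi (0:ℝ), (u : ℂ) ^ w * ((Real.exp (-(L * u)) : ℝ) : ℂ)
      = ∫ t in Set.Ioi (0:ℝ), (t : ℂ) ^ (w + 1 - 1) * Complex.exp (-((L : ℂ) * t)) := by
    refine setIntegral_congr_fun measurableSet_Ioi (fun u _ => ?_)
    rw [add_sub_cancel_right, Complex.ofReal_exp]
    push_cast
    ring_nf
  rw [heq, this]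
  have harg : Complex.arg (L : ℂ) ≠ Real.pi := by
    rw [Complex.arg_ofReal_of_nonneg hL.le]
    exact Real.pi_ne_zero.symm
  rw [one_div, Complex.inv_cpow _ _ harg, mul_comm, div_eq_mul_inv]

end helpers

/-- **Watson's lemma.** If `K` is absolutely integrable on `(0,v)` and
`K(u) = u^s J(u)` on `(0,r)` with `Re s > −1` and `J` having `M+1` continuous
derivatives on `[0,r]`, then `Δ(L) = ∫_0^v e^{−Lu} K(u) du` is finite for all `L > 0`
and admits the asymptotic expansion
`Δ(L) = ∑_{k=0}^M J^{(k)}(0) Γ(s+k+1)/(k! L^{s+k+1}) + O(L^{−Re s − M − 2})`. -/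
theorem watson_lemma
    (v : ℝ) (hv : 0 < v) (K : ℝ → ℂ) (hK : IntegrableOn K (Set.Ioo 0 v))
    (s : ℂ) (hs : -1 < s.re) (r : ℝ) (hr : 0 < r) (hrv : r ≤ v)
    (M : ℕ) (J : ℝ → ℂ) (hJ : ContDiffOn ℝ (M + 1 : ℕ) J (Set.Icc 0 r))
    (hKJ : ∀ u ∈ Set.Ioo (0 : ℝ) r, K u = ((u : ℂ) ^ s) * J u) :
    (∀ L : ℝ, 0 < L →
      IntegrableOn (fun u : ℝ => ((Real.exp (-(L * u)) : ℝ) : ℂ) * K u) (Set.Ioo 0 v)) ∧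
    ∃ C : ℝ, ∀ L : ℝ, 1 ≤ L →
      ‖(∫ u in Set.Ioo (0 : ℝ) v, ((Real.exp (-(L * u)) : ℝ) : ℂ) * K u) -
          ∑ k ∈ Finset.range (M + 1),
            iteratedDerivWithin k J (Set.Icc 0 r) 0 * Complex.Gamma (s + k + 1) /
              ((k.factorial : ℂ) * (L : ℂ) ^ (s + (k : ℂ) + 1))‖
        ≤ C * L ^ (-s.re - (M : ℝ) - 2) := by
  have hmain : ∀ L : ℝ, 0 < L →
      IntegrableOn (fun u : ℝ => ((Real.exp (-(L * u)) : ℝ) : ℂ) * K u) (Set.Ioo 0 v) := by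
    intro L hL
    refine Integrable.bdd_mul (c := 1) hK ?_ ?_
    · exact (Complex.continuous_ofReal.comp
        (Real.continuous_exp.comp (continuous_const.mul continuous_id).neg)).aestronglyMeasurable
    · rw [ae_restrict_iff' measurableSet_Ioo]
      filter_upwards with u hu
      have : ‖((Real.exp (-(L * u)) : ℝ) : ℂ)‖ = Real.exp (-(L * u)) := by
        rw [Complex.norm_real, Real.norm_eq_abs, abs_of_pos (Real.exp_pos _)]
      rw [this]
      exact Real.exp_le_one_iff.mpr (by nlinarith [hu.1])
  refine ⟨hmain, ?_⟩
  -- constants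
  obtain ⟨CR0, hCR0⟩ := exists_taylor_mean_remainder_bound hr.le hJ
  set CR : ℝ := max CR0 0 with hCRdef
  have hCRnn : 0 ≤ CR := le_max_right _ _
  set N : ℕ := ⌈s.re + M + 2⌉₊ with hNdef
  have hN : s.re + M + 2 ≤ N := Nat.le_ceil _
  set c : ℕ → ℂ := fun k => iteratedDerivWithin k J (Set.Icc 0 r) 0 with hc
  set D : ℕ → ℝ := fun k => ∫ u in Set.Ici r, u ^ (s.re + k) * Real.exp (-(1 * u)) with hD
  have hDnn : ∀ k, 0 ≤ D k := by
    intro k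
    refine setIntegral_nonneg measurableSet_Ici (fun u hu => ?_)
    have hu0 : (0:ℝ) < u := lt_of_lt_of_le hr hu
    exact mul_nonneg (Real.rpow_nonneg hu0.le _) (Real.exp_pos _).le
  set B0 : ℝ := ∑ k ∈ Finset.range (M + 1), ‖c k‖ / k.factorial * D k with hB0
  have hB0nn : 0 ≤ B0 := Finset.sum_nonneg fun k _ =>
    mul_nonneg (div_nonneg (norm_nonneg _) (Nat.cast_nonneg _)) (hDnn k)
  set KI : ℝ := ∫ u in Set.Ioo 0 v, ‖K u‖ with hKI
  have hKInn : 0 ≤ KI := setIntegral_nonneg measurableSet_Ioo fun u _ => norm_nonneg _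
  set Q : ℝ := Real.exp r * N.factorial / r ^ N with hQ
  have hQnn : 0 ≤ Q := div_nonneg (mul_nonneg (Real.exp_pos r).le (Nat.cast_nonneg _)) (pow_nonneg hr.le N)
  refine ⟨CR * Real.Gamma (s.re + M + 2) + (B0 + KI) * Q, ?_⟩
  intro L hL1
  have hL0 : (0:ℝ) < L := lt_of_lt_of_le one_pos hL1
  set E : ℝ → ℂ := fun u => ((Real.exp (-(L * u)) : ℝ) : ℂ) with hE
  set P : ℝ → ℂ := fun u => taylorWithinEval J M (Set.Icc 0 r) 0 u with hP
  set F : ℕ → ℝ → ℂ := fun k u => (u : ℂ) ^ (s + (k : ℂ)) * E u with hF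
  set Lx : ℝ := L ^ (-s.re - (M:ℝ) - 2) with hLx
  have hLxnn : 0 ≤ Lx := Real.rpow_nonneg hL0.le _
  -- set facts
  have hset1 : Set.Ioo (0:ℝ) r ∪ Set.Ico r v = Set.Ioo 0 v := by
    ext x
    simp only [Set.mem_union, Set.mem_Ioo, Set.mem_Ico]
    constructor
    · rintro (⟨h1, h2⟩ | ⟨h1, h2⟩)
      · exact ⟨h1, lt_of_lt_of_le h2 hrv⟩
      · exact ⟨lt_of_lt_of_le hr h1, h2⟩
    · rintro ⟨h1, h2⟩
      rcases lt_or_ge x r with h | h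
      · exact Or.inl ⟨h1, h⟩
      · exact Or.inr ⟨h, h2⟩
  have hset2 : Set.Ioo (0:ℝ) r ∪ Set.Ici r = Set.Ioi 0 := by
    ext x
    simp only [Set.mem_union, Set.mem_Ioo, Set.mem_Ici, Set.mem_Ioi]
    constructor
    · rintro (⟨h1, _⟩ | h)
      · exact h1
      · exact lt_of_lt_of_le hr h
    · intro hx
      rcases lt_or_ge x r with h | h
      · exact Or.inl ⟨hx, h⟩
      · exact Or.inr h
  have hdisj1 : Disjoint (Set.Ioo (0:ℝ) r) (Set.Ico r v) := by
    rw [Set.disjoint_left]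
    rintro x ⟨_, h2⟩ ⟨h3, _⟩
    exact absurd h3 (not_le.mpr h2)
  have hdisj2 : Disjoint (Set.Ioo (0:ℝ) r) (Set.Ici r) := by
    rw [Set.disjoint_left]
    rintro x ⟨_, h2⟩ h3
    exact absurd h3 (not_le.mpr h2)
  have hsub_r : Set.Ioo (0:ℝ) r ⊆ Set.Ioo 0 v := Set.Ioo_subset_Ioo_right hrv
  have hsub_rv : Set.Ico r v ⊆ Set.Ioo 0 v := fun x hx => ⟨lt_of_lt_of_le hr hx.1, hx.2⟩
  have hsub_Ioi : Set.Ioo (0:ℝ) r ⊆ Set.Ioi 0 := fun x hx => hx.1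
  have hsub_Ici : Set.Ici r ⊆ Set.Ioi 0 := fun x hx => lt_of_lt_of_le hr hx
  -- integrabilities
  have hwre : ∀ k : ℕ, -1 < (s + (k:ℂ)).re := by
    intro k
    simp only [Complex.add_re, Complex.natCast_re]
    have : (0:ℝ) ≤ k := Nat.cast_nonneg k
    linarith
  have hFint : ∀ k : ℕ, IntegrableOn (F k) (Set.Ioi 0) := fun k =>
    watson_aux_cplx_int (hwre k) hL0
  have hf_int : IntegrableOn (fun u => E u * K u) (Set.Ioo 0 v) := hmain L hL0
  have hf_int_r : IntegrableOn (fun u => E u * K u) (Set.Ioo 0 r) := hf_int.mono_set hsub_r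
  have hf_int_rv : IntegrableOn (fun u => E u * K u) (Set.Ico r v) := hf_int.mono_set hsub_rv
  have hEJ : Set.EqOn (fun u => E u * K u) (fun u => E u * ((u:ℂ)^s * J u)) (Set.Ioo 0 r) := by
    intro u hu
    simp only
    rw [hKJ u hu]
  have hint2 : IntegrableOn (fun u => E u * ((u:ℂ)^s * J u)) (Set.Ioo 0 r) :=
    hf_int_r.congr_fun hEJ measurableSet_Ioo
  -- pointwise Taylor decomposition
  have hpt : ∀ u ∈ Set.Ioo (0:ℝ) r,
      E u * ((u:ℂ)^s * J u) = E u * ((u:ℂ)^s * (J u - P u))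
        + ∑ k ∈ Finset.range (M + 1), (c k / (k.factorial : ℂ)) * F k u := by
    intro u hu
    have hu0 : (u:ℂ) ≠ 0 := by
      exact_mod_cast ne_of_gt hu.1
    have hPsum : E u * ((u:ℂ)^s * P u)
        = ∑ k ∈ Finset.range (M + 1), (c k / (k.factorial : ℂ)) * F k u := by
      rw [hP]
      simp only [taylor_within_apply]
      push_cast
      rw [Finset.mul_sum, Finset.mul_sum]
      refine Finset.sum_congr rfl (fun k _ => ?_)
      rw [Complex.real_smul, hF]
      simp only
      rw [Complex.cpow_add _ _ hu0, Complex.cpow_natCast]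
      have hkf : ((k.factorial : ℂ)) ≠ 0 := by
        exact_mod_cast k.factorial_ne_zero
      push_cast
      field_simp
      ring
    calc E u * ((u:ℂ)^s * J u)
        = E u * ((u:ℂ)^s * (J u - P u)) + E u * ((u:ℂ)^s * P u) := by ring
      _ = _ := by rw [hPsum]
  have hsum_int : IntegrableOn
      (fun u => ∑ k ∈ Finset.range (M + 1), (c k / (k.factorial : ℂ)) * F k u)
      (Set.Ioo 0 r) :=
    integrable_finset_sum _ fun k _ => ((hFint k).mono_set hsub_Ioi).const_mul _
  have hrem_int : IntegrableOn (fun u => E u * ((u:ℂ)^s * (J u - P u))) (Set.Ioo 0 r) := by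
    refine (hint2.sub hsum_int).congr ?_
    refine (ae_restrict_mem measurableSet_Ioo).mono fun u hu => ?_
    simp only [Pi.sub_apply]
    rw [hpt u hu]
    ring
  -- integral over (0,r)
  have hI1 : ∫ u in Set.Ioo (0:ℝ) r, E u * K u
      = (∫ u in Set.Ioo (0:ℝ) r, E u * ((u:ℂ)^s * (J u - P u)))
        + ∑ k ∈ Finset.range (M + 1),
            (c k / (k.factorial : ℂ)) * ∫ u in Set.Ioo (0:ℝ) r, F k u := by
    rw [setIntegral_congr_fun measurableSet_Ioo hEJ,
      setIntegral_congr_fun measurableSet_Ioo (fun u hu => hpt u hu),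
      integral_add hrem_int hsum_int, integral_finset_sum _
        (fun k _ => ((hFint k).mono_set hsub_Ioi).const_mul _)]
    congr 1
    exact Finset.sum_congr rfl fun k _ => integral_const_mul _ _
  -- split full integral
  have hsplit : ∫ u in Set.Ioo (0:ℝ) v, E u * K u
      = (∫ u in Set.Ioo (0:ℝ) r, E u * K u) + ∫ u in Set.Ico r v, E u * K u := by
    rw [← hset1]
    exact setIntegral_union hdisj1 measurableSet_Ico hf_int_r hf_int_rv
  -- Gamma evaluation
  have hIoo_eq : ∀ k ∈ Finset.range (M + 1),
      ∫ u in Set.Ioo (0:ℝ) r, F k u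
        = Complex.Gamma (s + k + 1) / (L : ℂ) ^ (s + (k:ℂ) + 1) - ∫ u in Set.Ici r, F k u := by
    intro k _
    have hu : (∫ u in Set.Ioi (0:ℝ), F k u)
        = (∫ u in Set.Ioo (0:ℝ) r, F k u) + ∫ u in Set.Ici r, F k u := by
      rw [← hset2]
      exact setIntegral_union hdisj2 measurableSet_Ici
        ((hFint k).mono_set hsub_Ioi) ((hFint k).mono_set hsub_Ici)
    have hgF : (∫ u in Set.Ioi (0:ℝ), F k u)
        = Complex.Gamma (s + (k:ℂ) + 1) / (L : ℂ) ^ (s + (k:ℂ) + 1) := by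
      simp only [hF, hE]
      exact watson_aux_gamma (hwre k) hL0
    rw [hgF] at hu
    have : Complex.Gamma (s + (k:ℂ) + 1) = Complex.Gamma (s + k + 1) := by norm_cast
    rw [this] at hu
    linear_combination -hu
  -- key decomposition
  have key : (∫ u in Set.Ioo (0:ℝ) v, E u * K u) -
      (∑ k ∈ Finset.range (M + 1),
        c k * Complex.Gamma (s + k + 1) / ((k.factorial : ℂ) * (L : ℂ) ^ (s + (k:ℂ) + 1)))
      = (∫ u in Set.Ioo (0:ℝ) r, E u * ((u:ℂ)^s * (J u - P u)))
        + (∫ u in Set.Ico r v, E u * K u)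
        - ∑ k ∈ Finset.range (M + 1),
            (c k / (k.factorial : ℂ)) * ∫ u in Set.Ici r, F k u := by
    have hsum2 : ∑ k ∈ Finset.range (M + 1),
        (c k / (k.factorial : ℂ)) * ∫ u in Set.Ioo (0:ℝ) r, F k u
        = ∑ k ∈ Finset.range (M + 1), (c k / (k.factorial : ℂ)) *
            (Complex.Gamma (s + k + 1) / (L : ℂ) ^ (s + (k:ℂ) + 1) - ∫ u in Set.Ici r, F k u) :=
      Finset.sum_congr rfl fun k hk => by rw [hIoo_eq k hk]
    rw [hsplit, hI1, hsum2]
    simp only [mul_sub]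
    rw [Finset.sum_sub_distrib]
    have : ∑ k ∈ Finset.range (M + 1),
        (c k / (k.factorial : ℂ)) * (Complex.Gamma (s + k + 1) / (L : ℂ) ^ (s + (k:ℂ) + 1))
        = ∑ k ∈ Finset.range (M + 1),
          c k * Complex.Gamma (s + k + 1) / ((k.factorial : ℂ) * (L : ℂ) ^ (s + (k:ℂ) + 1)) := by
      refine Finset.sum_congr rfl fun k _ => ?_
      rw [div_mul_div_comm]
    rw [this]
    ring
  -- pointwise remainder bound
  have hremnorm : ∀ u ∈ Set.Ioo (0:ℝ) r,
      ‖E u * ((u:ℂ)^s * (J u - P u))‖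
        ≤ CR * (u ^ (s.re + (M:ℝ) + 1) * Real.exp (-(L * u))) := by
    intro u hu
    have hu0 : (0:ℝ) < u := hu.1
    have hnE : ‖E u‖ = Real.exp (-(L * u)) := by
      simp only [hE]
      rw [Complex.norm_real, Real.norm_eq_abs, abs_of_pos (Real.exp_pos _)]
    have hncp : ‖(u:ℂ)^s‖ = u ^ s.re := by
      rw [Complex.norm_cpow_eq_rpow_re_of_pos hu0]
    have hTay : ‖J u - P u‖ ≤ CR * u ^ (M + 1) := by
      have h := hCR0 u ⟨hu0.le, hu.2.le⟩
      rw [sub_zero] at h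
      refine h.trans ?_
      exact mul_le_mul_of_nonneg_right (le_max_left _ _) (pow_nonneg hu0.le _)
    have hre : u ^ (s.re + (M:ℝ) + 1) = u ^ s.re * u ^ (M + 1) := by
      rw [← Real.rpow_natCast u (M + 1), ← Real.rpow_add hu0]
      congr 1
      push_cast
      ring
    calc ‖E u * ((u:ℂ)^s * (J u - P u))‖
        = Real.exp (-(L * u)) * (u ^ s.re * ‖J u - P u‖) := by
          rw [norm_mul, norm_mul, hnE, hncp]
      _ ≤ Real.exp (-(L * u)) * (u ^ s.re * (CR * u ^ (M + 1))) := by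
          have h2 : (0:ℝ) ≤ u ^ s.re := Real.rpow_nonneg hu0.le _
          have h1 : (0:ℝ) ≤ Real.exp (-(L * u)) := (Real.exp_pos _).le
          exact mul_le_mul_of_nonneg_left
            (mul_le_mul_of_nonneg_left hTay h2) h1
      _ = CR * (u ^ (s.re + (M:ℝ) + 1) * Real.exp (-(L * u))) := by
          rw [hre]; ring
  -- Bound 1
  have hg_int_Ioi : IntegrableOn
      (fun u : ℝ => CR * (u ^ (s.re + (M:ℝ) + 1) * Real.exp (-(L * u)))) (Set.Ioi 0) :=
    (watson_aux_real_int (by linarith [Nat.cast_nonneg (α := ℝ) M]) hL0).const_mul CR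
  have hA : ‖∫ u in Set.Ioo (0:ℝ) r, E u * ((u:ℂ)^s * (J u - P u))‖
      ≤ CR * Real.Gamma (s.re + M + 2) * Lx := by
    have h1 : ‖∫ u in Set.Ioo (0:ℝ) r, E u * ((u:ℂ)^s * (J u - P u))‖
        ≤ ∫ u in Set.Ioo (0:ℝ) r, CR * (u ^ (s.re + (M:ℝ) + 1) * Real.exp (-(L * u))) := by
      refine norm_integral_le_of_norm_le (hg_int_Ioi.mono_set hsub_Ioi) ?_
      rw [ae_restrict_iff' measurableSet_Ioo]
      filter_upwards with u hu
      exact hremnorm u hu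
    have h2 : (∫ u in Set.Ioo (0:ℝ) r, CR * (u ^ (s.re + (M:ℝ) + 1) * Real.exp (-(L * u))))
        ≤ ∫ u in Set.Ioi (0:ℝ), CR * (u ^ (s.re + (M:ℝ) + 1) * Real.exp (-(L * u))) := by
      refine setIntegral_mono_set hg_int_Ioi ?_ (HasSubset.Subset.eventuallyLE hsub_Ioi)
      rw [Filter.EventuallyLE, ae_restrict_iff' measurableSet_Ioi]
      filter_upwards with u hu
      have hu0 : (0:ℝ) < u := hu
      exact mul_nonneg hCRnn
        (mul_nonneg (Real.rpow_nonneg hu0.le _) (Real.exp_pos _).le)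
    have h3 : (∫ u in Set.Ioi (0:ℝ), CR * (u ^ (s.re + (M:ℝ) + 1) * Real.exp (-(L * u))))
        = CR * Real.Gamma (s.re + M + 2) * Lx := by
      rw [integral_const_mul]
      have hg := Real.integral_rpow_mul_exp_neg_mul_Ioi (a := s.re + M + 2)
        (by linarith [Nat.cast_nonneg (α := ℝ) M]) hL0
      rw [show s.re + (M:ℝ) + 2 - 1 = s.re + (M:ℝ) + 1 by ring] at hg
      rw [hg, hLx, one_div, Real.inv_rpow hL0.le, ← Real.rpow_neg hL0.le,
        show -(s.re + (M:ℝ) + 2) = -s.re - (M:ℝ) - 2 by ring]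
      ring
    linarith
  -- Bound 2 : tails of Gamma integrals
  have hTailB : ∀ k ∈ Finset.range (M + 1),
      ‖∫ u in Set.Ici r, F k u‖ ≤ Real.exp (-((L - 1) * r)) * D k := by
    intro k _
    have htk : (-1:ℝ) < s.re + k := by
      have : (0:ℝ) ≤ k := Nat.cast_nonneg k
      linarith
    have hgk : IntegrableOn
        (fun u : ℝ => Real.exp (-((L - 1) * r)) * (u ^ (s.re + (k:ℝ)) * Real.exp (-(1 * u))))
        (Set.Ici r) :=
      ((watson_aux_real_int htk one_pos).mono_set hsub_Ici).const_mul _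
    have h1 : ‖∫ u in Set.Ici r, F k u‖
        ≤ ∫ u in Set.Ici r,
            Real.exp (-((L - 1) * r)) * (u ^ (s.re + (k:ℝ)) * Real.exp (-(1 * u))) := by
      refine norm_integral_le_of_norm_le hgk ?_
      rw [ae_restrict_iff' measurableSet_Ici]
      filter_upwards with u hu
      have hu0 : (0:ℝ) < u := lt_of_lt_of_le hr hu
      have hnF : ‖F k u‖ = u ^ (s.re + (k:ℝ)) * Real.exp (-(L * u)) := by
        simp only [hF, hE]
        rw [norm_mul, Complex.norm_cpow_eq_rpow_re_of_pos hu0,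
          Complex.norm_real, Real.norm_eq_abs, abs_of_pos (Real.exp_pos _)]
        simp [Complex.add_re, Complex.natCast_re]
      rw [hnF]
      have hexp : Real.exp (-(L * u)) ≤ Real.exp (-((L - 1) * r)) * Real.exp (-(1 * u)) := by
        rw [← Real.exp_add]
        apply Real.exp_le_exp.mpr
        have h5 : (L - 1) * r ≤ (L - 1) * u := mul_le_mul_of_nonneg_left hu (by linarith)
        linarith
      calc u ^ (s.re + (k:ℝ)) * Real.exp (-(L * u))
          ≤ u ^ (s.re + (k:ℝ)) * (Real.exp (-((L - 1) * r)) * Real.exp (-(1 * u))) :=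
            mul_le_mul_of_nonneg_left hexp (Real.rpow_nonneg hu0.le _)
        _ = Real.exp (-((L - 1) * r)) * (u ^ (s.re + (k:ℝ)) * Real.exp (-(1 * u))) := by ring
    refine h1.trans (le_of_eq ?_)
    rw [integral_const_mul]
  have hSum : ‖∑ k ∈ Finset.range (M + 1),
        (c k / (k.factorial : ℂ)) * ∫ u in Set.Ici r, F k u‖
      ≤ Real.exp (-((L - 1) * r)) * B0 := by
    refine (norm_sum_le _ _).trans ?_
    rw [hB0, Finset.mul_sum]
    refine Finset.sum_le_sum fun k hk => ?_
    rw [norm_mul, norm_div, Complex.norm_natCast]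
    calc ‖c k‖ / (k.factorial : ℝ) * ‖∫ u in Set.Ici r, F k u‖
        ≤ ‖c k‖ / (k.factorial : ℝ) * (Real.exp (-((L - 1) * r)) * D k) :=
          mul_le_mul_of_nonneg_left (hTailB k hk) (by positivity)
      _ = Real.exp (-((L - 1) * r)) * (‖c k‖ / (k.factorial : ℝ) * D k) := by ring
  -- Bound 3 : tail of K
  have hC3 : ‖∫ u in Set.Ico r v, E u * K u‖ ≤ Real.exp (-((L - 1) * r)) * KI := by
    have h1 : ‖∫ u in Set.Ico r v, E u * K u‖
        ≤ ∫ u in Set.Ico r v, Real.exp (-((L - 1) * r)) * ‖K u‖ := by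
      have hKn : IntegrableOn (fun u => ‖K u‖) (Set.Ioo 0 v) := hK.norm
      refine norm_integral_le_of_norm_le ((hKn.mono_set hsub_rv).const_mul _) ?_
      rw [ae_restrict_iff' measurableSet_Ico]
      filter_upwards with u hu
      have hnE : ‖E u‖ = Real.exp (-(L * u)) := by
        simp only [hE]
        rw [Complex.norm_real, Real.norm_eq_abs, abs_of_pos (Real.exp_pos _)]
      rw [norm_mul, hnE]
      have hle : Real.exp (-(L * u)) ≤ Real.exp (-((L - 1) * r)) :=
        Real.exp_le_exp.mpr (by
          have h6 : L * r ≤ L * u := mul_le_mul_of_nonneg_left hu.1 hL0.le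
          linarith)
      exact mul_le_mul_of_nonneg_right hle (norm_nonneg _)
    rw [integral_const_mul] at h1
    refine h1.trans (mul_le_mul_of_nonneg_left ?_ (Real.exp_pos _).le)
    rw [hKI]
    have hKn : IntegrableOn (fun u => ‖K u‖) (Set.Ioo 0 v) := hK.norm
    refine setIntegral_mono_set hKn ?_ (HasSubset.Subset.eventuallyLE hsub_rv)
    filter_upwards with u using norm_nonneg _
  -- exponential decay beats powers
  have hExp : Real.exp (-((L - 1) * r)) ≤ Q * Lx := by
    have hLr : (0:ℝ) ≤ L * r := by positivity
    have h1 : (L * r) ^ N / N.factorial ≤ Real.exp (L * r) :=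
      Real.pow_div_factorial_le_exp _ hLr N
    have hpow : (0:ℝ) < (L * r) ^ N / N.factorial := by positivity
    have h2 : Real.exp (-(L * r)) ≤ N.factorial / (L * r) ^ N := by
      rw [Real.exp_neg]
      calc (Real.exp (L * r))⁻¹ ≤ ((L * r) ^ N / N.factorial)⁻¹ :=
            inv_anti₀ hpow h1
        _ = N.factorial / (L * r) ^ N := by rw [inv_div]
    have h3 : Real.exp (-((L - 1) * r)) = Real.exp r * Real.exp (-(L * r)) := by
      rw [← Real.exp_add]; congr 1; ring
    have hLN : L ^ (-(N:ℝ)) ≤ Lx := by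
      rw [hLx]
      refine Real.rpow_le_rpow_of_exponent_le hL1 ?_
      linarith
    calc Real.exp (-((L - 1) * r))
        = Real.exp r * Real.exp (-(L * r)) := h3
      _ ≤ Real.exp r * (N.factorial / (L * r) ^ N) :=
          mul_le_mul_of_nonneg_left h2 (Real.exp_pos r).le
      _ = Q * L ^ (-(N:ℝ)) := by
          rw [hQ, mul_pow, Real.rpow_neg hL0.le, Real.rpow_natCast]
          have hLN0 : (L:ℝ) ^ N ≠ 0 := (pow_pos hL0 N).ne'
          have hrN0 : (r:ℝ) ^ N ≠ 0 := (pow_pos hr N).ne'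
          field_simp
      _ ≤ Q * Lx := mul_le_mul_of_nonneg_left hLN hQnn
  -- final assembly
  rw [key]
  have tri : ‖(∫ u in Set.Ioo (0:ℝ) r, E u * ((u:ℂ)^s * (J u - P u)))
      + (∫ u in Set.Ico r v, E u * K u)
      - ∑ k ∈ Finset.range (M + 1), (c k / (k.factorial : ℂ)) * ∫ u in Set.Ici r, F k u‖
      ≤ ‖∫ u in Set.Ioo (0:ℝ) r, E u * ((u:ℂ)^s * (J u - P u))‖
        + ‖∫ u in Set.Ico r v, E u * K u‖
        + ‖∑ k ∈ Finset.range (M + 1), (c k / (k.factorial : ℂ)) * ∫ u in Set.Ici r, F k u‖ :=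
    (norm_sub_le _ _).trans (add_le_add_left (norm_add_le _ _) _)
  refine tri.trans ?_
  have hBK : (0:ℝ) ≤ B0 + KI := by linarith
  calc ‖∫ u in Set.Ioo (0:ℝ) r, E u * ((u:ℂ)^s * (J u - P u))‖
        + ‖∫ u in Set.Ico r v, E u * K u‖
        + ‖∑ k ∈ Finset.range (M + 1), (c k / (k.factorial : ℂ)) * ∫ u in Set.Ici r, F k u‖
      ≤ CR * Real.Gamma (s.re + M + 2) * Lx + Real.exp (-((L - 1) * r)) * KI
          + Real.exp (-((L - 1) * r)) * B0 := add_le_add (add_le_add hA hC3) hSum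
    _ = CR * Real.Gamma (s.re + M + 2) * Lx + (B0 + KI) * Real.exp (-((L - 1) * r)) := by ring
    _ ≤ CR * Real.Gamma (s.re + M + 2) * Lx + (B0 + KI) * (Q * Lx) :=
        add_le_add_right (mul_le_mul_of_nonneg_left hExp hBK) _
    _ = (CR * Real.Gamma (s.re + M + 2) + (B0 + KI) * Q) * Lx := by ring
end

section
/- Assume in addition that |γ_n| ≥ 1 for every n. Then for every τ ∈ ℝ, (1/Y) ∫_1^Y t^{−iτ} f(t) dt → 0 as Y → ∞, where t^{−iτ} := e^{−iτ log t}. (Logarithmic-Cesàro cancellation of an absolutely convergent trigonometric series twisted by t^{−iτ}.) -/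
open MeasureTheory intervalIntegral Complex Filter

private lemma cpow_hasDerivAt (c : ℂ) {x : ℝ} (hx : 0 < x) :
    HasDerivAt (fun y : ℝ => (y : ℂ) ^ c) (c * (x : ℂ) ^ (c - 1)) x := by
  have h : HasDerivAt (fun z : ℂ => z ^ c) (c * (x : ℂ) ^ (c - 1)) (x : ℂ) := by
    simpa using (hasDerivAt_id (x : ℂ)).cpow_const (Complex.ofReal_mem_slitPlane.2 hx)
  exact h.comp_ofReal

private lemma exp_hasDerivAt (γ : ℝ) (t : ℝ) :
    HasDerivAt (fun t : ℝ => Complex.exp (Complex.I * γ * t))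
      (Complex.I * γ * Complex.exp (Complex.I * γ * t)) t := by
  have h := (((hasDerivAt_id (t : ℂ)).const_mul (Complex.I * γ)).cexp).comp_ofReal
  simpa [mul_comm] using h

private lemma norm_cpow_eq_one (τ : ℝ) {t : ℝ} (ht : 0 < t) :
    ‖(t : ℂ) ^ (-(Complex.I * τ))‖ = 1 := by
  rw [Complex.norm_cpow_eq_rpow_re_of_pos ht]
  simp

private lemma key_bound (τ : ℝ) {γ : ℝ} (hγ : 1 ≤ |γ|) {Y : ℝ} (hY : 1 ≤ Y) :
    ‖∫ t in (1:ℝ)..Y, ((t : ℂ) ^ (-(Complex.I * τ))) * Complex.exp (Complex.I * γ * t)‖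
      ≤ 2 + |τ| * Real.log Y := by
  have hγ0 : (γ : ℝ) ≠ 0 := by intro h; rw [h] at hγ; simp at hγ; linarith
  have hγc : (Complex.I * γ) ≠ 0 := by
    simp [Complex.I_ne_zero, Complex.ofReal_ne_zero, hγ0]
  set c : ℂ := -(Complex.I * τ) with hc
  set u : ℝ → ℂ := fun t => (t : ℂ) ^ c with hu_def
  set u' : ℝ → ℂ := fun t => c * (t : ℂ) ^ (c - 1) with hu'_def
  set v : ℝ → ℂ := fun t => Complex.exp (Complex.I * γ * t) / (Complex.I * γ) with hv_def
  set v' : ℝ → ℂ := fun t => Complex.exp (Complex.I * γ * t) with hv'_def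
  have hpos : ∀ x ∈ Set.uIcc (1:ℝ) Y, (0:ℝ) < x := by
    intro x hx
    rw [Set.uIcc_of_le hY] at hx
    linarith [hx.1]
  have hu : ∀ x ∈ Set.uIcc (1:ℝ) Y, HasDerivAt u (u' x) x :=
    fun x hx => cpow_hasDerivAt c (hpos x hx)
  have hv : ∀ x ∈ Set.uIcc (1:ℝ) Y, HasDerivAt v (v' x) x := by
    intro x _
    have := (exp_hasDerivAt γ x).div_const (Complex.I * γ)
    simpa [hv_def, hv'_def, mul_div_assoc, mul_div_cancel_left₀ _ hγc] using this
  have hu'cont : ContinuousOn u' (Set.uIcc 1 Y) := by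
    intro x hx
    exact ((Complex.continuousAt_ofReal_cpow_const x (c-1)
      (Or.inr (ne_of_gt (hpos x hx)))).const_smul c).continuousWithinAt
  have hu'int : IntervalIntegrable u' volume 1 Y := hu'cont.intervalIntegrable
  have hv'int : IntervalIntegrable v' volume 1 Y := by
    apply Continuous.intervalIntegrable
    exact Complex.continuous_exp.comp (by continuity)
  have hibp := integral_mul_deriv_eq_deriv_mul hu hv hu'int hv'int
  rw [hibp]
  have hnu : ∀ t : ℝ, 0 < t → ‖u t‖ = 1 := fun t ht => norm_cpow_eq_one τ ht
  have hnv : ∀ t : ℝ, ‖v t‖ = 1 / |γ| := by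
    intro t
    rw [hv_def]
    simp only [norm_div, norm_mul, Complex.norm_I, Complex.norm_real,
      Complex.norm_exp]
    simp [Complex.mul_re]
  have hγinv : 1 / |γ| ≤ 1 := by
    rw [div_le_one (by linarith)]; exact hγ
  have hbd1 : ‖u Y * v Y‖ ≤ 1 := by
    rw [norm_mul, hnu Y (by linarith), hnv]; simpa using hγinv
  have hbd2 : ‖u 1 * v 1‖ ≤ 1 := by
    rw [norm_mul, hnu 1 one_pos, hnv]; simpa using hγinv
  have hnc : ‖c‖ = |τ| := by
    rw [hc]; simp
  have hbound : ∀ t ∈ Set.Icc (1:ℝ) Y, ‖u' t * v t‖ ≤ |τ| / t := by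
    intro t ht
    have ht0 : (0:ℝ) < t := by linarith [ht.1]
    rw [norm_mul, hnv, hu'_def]
    simp only [norm_mul, hnc]
    rw [Complex.norm_cpow_eq_rpow_re_of_pos ht0]
    have hre : (c - 1).re = -1 := by rw [hc]; simp
    rw [hre, Real.rpow_neg_one]
    calc |τ| * t⁻¹ * (1 / |γ|) ≤ |τ| * t⁻¹ * 1 := by
          apply mul_le_mul_of_nonneg_left hγinv (by positivity)
      _ = |τ| / t := by ring
  have hcont_uv : ContinuousOn (fun t => u' t * v t) (Set.uIcc 1 Y) := by
    apply hu'cont.mul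
    intro x _
    exact ((Complex.continuous_exp.comp (by continuity)).div_const _).continuousWithinAt
  have hint3 : ‖∫ t in (1:ℝ)..Y, u' t * v t‖ ≤ |τ| * Real.log Y := by
    have h1 : ‖∫ t in (1:ℝ)..Y, u' t * v t‖ ≤ |∫ t in (1:ℝ)..Y, |τ| / t| := by
      apply intervalIntegral.norm_integral_le_abs_of_norm_le
        (by filter_upwards [MeasureTheory.ae_restrict_mem measurableSet_uIoc] with t ht;
            rw [Set.uIoc_of_le hY] at ht;
            exact hbound t ⟨le_of_lt ht.1, ht.2⟩)
      apply ContinuousOn.intervalIntegrable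
      intro x hx
      exact (continuousOn_const.div continuousOn_id
        (fun y hy => ne_of_gt (hpos y hy))).continuousWithinAt hx
    have h2 : ∫ t in (1:ℝ)..Y, |τ| / t = |τ| * Real.log Y := by
      have : ∀ t : ℝ, |τ| / t = |τ| * (1 / t) := fun t => by ring
      simp_rw [this]
      rw [intervalIntegral.integral_const_mul, integral_one_div (by
        rw [Set.uIcc_of_le hY]; intro h; linarith [(h : (0:ℝ) ∈ Set.Icc 1 Y).1])]
      simp
    rw [h2] at h1
    rwa [_root_.abs_of_nonneg (mul_nonneg (abs_nonneg τ) (Real.log_nonneg hY))] at h1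
  calc ‖u Y * v Y - u 1 * v 1 - ∫ t in (1:ℝ)..Y, u' t * v t‖
      ≤ ‖u Y * v Y - u 1 * v 1‖ + ‖∫ t in (1:ℝ)..Y, u' t * v t‖ := norm_sub_le _ _
    _ ≤ (‖u Y * v Y‖ + ‖u 1 * v 1‖) + (|τ| * Real.log Y) := by
        gcongr; exact norm_sub_le _ _
    _ ≤ 2 + |τ| * Real.log Y := by linarith

/-- If moreover `|γₙ| ≥ 1` for all `n`, then for every `τ ∈ ℝ` the
twisted long averages cancel: `(1/Y) ∫_1^Y t^{−iτ} f(t) dt → 0` as `Y → ∞`. -/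
theorem twisted_trig_series_cesaro_cancellation
    (a : ℕ → ℂ) (ha : Summable fun n => ‖a n‖)
    (γ : ℕ → ℝ) (hγ : Function.Injective γ) (hγ1 : ∀ n : ℕ, 1 ≤ |γ n|)
    (f : ℝ → ℂ)
    (hf : ∀ t : ℝ, f t = ∑' n : ℕ, a n * Complex.exp (Complex.I * (γ n : ℂ) * (t : ℂ)))
    (τ : ℝ) :
    Filter.Tendsto
      (fun Y : ℝ => (1 / (Y : ℂ)) *
        ∫ t in (1 : ℝ)..Y, ((t : ℂ) ^ (-(Complex.I * (τ : ℂ)))) * f t)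
      Filter.atTop (nhds 0) := by
  set c : ℂ := -(Complex.I * τ) with hc
  set S : ℝ := ∑' n, ‖a n‖ with hS
  -- bound on the whole integral
  have hmain : ∀ Y : ℝ, 1 ≤ Y →
      ‖∫ t in (1:ℝ)..Y, ((t:ℂ) ^ c) * f t‖ ≤ S * (2 + |τ| * Real.log Y) := by
    intro Y hY
    -- swap integral and sum
    have hswap : ∫ t in (1:ℝ)..Y, ((t:ℂ) ^ c) * f t
        = ∑' n, a n * ∫ t in (1:ℝ)..Y, ((t:ℂ) ^ c) * Complex.exp (Complex.I * γ n * t) := by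
      have heq : ∀ t ∈ Set.Ioc (1:ℝ) Y, ((t:ℂ) ^ c) * f t
          = ∑' n, a n * (((t:ℂ) ^ c) * Complex.exp (Complex.I * γ n * t)) := by
        intro t _
        rw [hf t, ← tsum_mul_left]
        congr 1; ext n; ring
      rw [intervalIntegral.integral_of_le hY]
      rw [MeasureTheory.setIntegral_congr_fun measurableSet_Ioc heq]
      have hmeas : ∀ n : ℕ, AEStronglyMeasurable
          (fun t : ℝ => a n * (((t:ℂ) ^ c) * Complex.exp (Complex.I * γ n * t)))
          (volume.restrict (Set.Ioc (1:ℝ) Y)) := by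
        intro n
        apply ContinuousOn.aestronglyMeasurable _ measurableSet_Ioc
        apply ContinuousOn.mul continuousOn_const
        apply ContinuousOn.mul
        · intro x hx
          exact (Complex.continuousAt_ofReal_cpow_const x c
            (Or.inr (by intro h; rw [h] at hx; exact absurd hx.1 (by norm_num)))).continuousWithinAt
        · exact (Complex.continuous_exp.comp (by continuity)).continuousOn
      have hnorm : ∀ n : ℕ, ∀ t ∈ Set.Ioc (1:ℝ) Y,
          ‖a n * (((t:ℂ) ^ c) * Complex.exp (Complex.I * γ n * t))‖ = ‖a n‖ := by
        intro n t ht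
        have ht0 : (0:ℝ) < t := lt_trans one_pos ht.1
        rw [norm_mul, norm_mul, norm_cpow_eq_one τ ht0]
        simp [Complex.norm_exp, Complex.mul_re]
      rw [MeasureTheory.integral_tsum hmeas]
      · congr 1; ext n
        rw [MeasureTheory.integral_const_mul, ← intervalIntegral.integral_of_le hY]
      · have hb : ∀ n : ℕ, (∫⁻ t in Set.Ioc (1:ℝ) Y,
            ‖a n * (((t:ℂ) ^ c) * Complex.exp (Complex.I * γ n * t))‖₊ ∂volume)
            ≤ ‖a n‖₊ * ENNReal.ofReal (Y - 1) := by
          intro n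
          have : ∀ᵐ (t : ℝ) ∂(volume.restrict (Set.Ioc (1:ℝ) Y)),
              (‖a n * (((t:ℂ) ^ c) * Complex.exp (Complex.I * γ n * t))‖₊ : ENNReal)
              ≤ (‖a n‖₊ : ENNReal) := by
            filter_upwards [MeasureTheory.ae_restrict_mem measurableSet_Ioc] with t ht
            rw [ENNReal.coe_le_coe, ← NNReal.coe_le_coe, coe_nnnorm, coe_nnnorm,
              hnorm n t ht]
          calc (∫⁻ t in Set.Ioc (1:ℝ) Y, ‖a n * (((t:ℂ) ^ c) *
                Complex.exp (Complex.I * γ n * t))‖₊ ∂volume)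
              ≤ ∫⁻ _ in Set.Ioc (1:ℝ) Y, (‖a n‖₊ : ENNReal) ∂volume :=
                MeasureTheory.lintegral_mono_ae this
            _ = ‖a n‖₊ * ENNReal.ofReal (Y - 1) := by
                rw [MeasureTheory.setLIntegral_const, Real.volume_Ioc]
        apply ne_top_of_le_ne_top _ (ENNReal.tsum_le_tsum hb)
        rw [ENNReal.tsum_mul_right]
        apply ENNReal.mul_ne_top _ ENNReal.ofReal_ne_top
        rw [← ENNReal.coe_tsum]
        · exact ENNReal.coe_ne_top
        · rw [← NNReal.summable_coe]
          simpa [coe_nnnorm] using ha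
    rw [hswap]
    have hterm : ∀ n : ℕ, ‖a n * ∫ t in (1:ℝ)..Y, ((t:ℂ) ^ c) *
        Complex.exp (Complex.I * γ n * t)‖ ≤ ‖a n‖ * (2 + |τ| * Real.log Y) := by
      intro n
      rw [norm_mul]
      exact mul_le_mul_of_nonneg_left (key_bound τ (hγ1 n) hY) (norm_nonneg _)
    have hsum2 : Summable fun n => ‖a n‖ * (2 + |τ| * Real.log Y) := ha.mul_right _
    calc ‖∑' n, a n * ∫ t in (1:ℝ)..Y, ((t:ℂ) ^ c) * Complex.exp (Complex.I * γ n * t)‖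
        ≤ ∑' n, ‖a n * ∫ t in (1:ℝ)..Y, ((t:ℂ) ^ c) * Complex.exp (Complex.I * γ n * t)‖ := by
          apply norm_tsum_le_tsum_norm
          exact hsum2.of_nonneg_of_le (fun n => norm_nonneg _) hterm
      _ ≤ ∑' n, ‖a n‖ * (2 + |τ| * Real.log Y) :=
          Summable.tsum_le_tsum hterm (hsum2.of_nonneg_of_le (fun n => norm_nonneg _) hterm) hsum2
      _ = S * (2 + |τ| * Real.log Y) := by rw [tsum_mul_right]
  -- squeeze
  have hgtend : Filter.Tendsto (fun Y : ℝ => S * (2 + |τ| * Real.log Y) / Y)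
      Filter.atTop (nhds 0) := by
    have h1 : Filter.Tendsto (fun Y : ℝ => Real.log Y / Y) Filter.atTop (nhds 0) :=
      Real.isLittleO_log_id_atTop.tendsto_div_nhds_zero
    have h2 : Filter.Tendsto (fun Y : ℝ => Y⁻¹) Filter.atTop (nhds (0:ℝ)) :=
      tendsto_inv_atTop_zero
    have h3 := (h2.const_mul (S * 2)).add (h1.const_mul (S * |τ|))
    simp only [mul_zero, add_zero] at h3
    apply h3.congr
    intro Y
    field_simp
  apply squeeze_zero_norm' _ hgtend
  filter_upwards [Filter.eventually_ge_atTop (1:ℝ)] with Y hY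
  have hY0 : (0:ℝ) < Y := by linarith
  rw [norm_mul]
  have hnY : ‖(1 / (Y:ℂ))‖ = 1 / Y := by
    simp [abs_of_pos hY0]
  rw [hnY, div_mul_eq_mul_div, one_mul]
  exact (div_le_div_iff_of_pos_right hY0).2 (hmain Y hY)
end

section
/- If a_{n₀} ≠ 0 for some index n₀, then there exists δ > 0 such that the set {t ∈ ℝ : |f(t)| ≥ δ} is unbounded above; in particular limsup_{t→∞} |f(t)| ≥ δ > 0, so there is a sequence t_m → ∞ with |f(t_m)| ≥ δ for all m. -/
open Filter Finset

private lemma norm_exp_I_mul' (x t : ℝ) : ‖Complex.exp (Complex.I * x * t)‖ = 1 := by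
  have hx : Complex.I * (x:ℂ) * (t:ℂ) = ((x*t : ℝ):ℂ) * Complex.I := by push_cast; ring
  rw [hx, Complex.norm_exp_ofReal_mul_I]

set_option maxHeartbeats 1000000 in
private lemma key_step
    (a : ℕ → ℂ) (ha : Summable fun n => ‖a n‖)
    (γ : ℕ → ℝ) (hγ : Function.Injective γ)
    (f : ℝ → ℂ)
    (hf : ∀ t : ℝ, f t = ∑' n : ℕ, a n * Complex.exp (Complex.I * (γ n : ℂ) * (t : ℂ)))
    (n₀ : ℕ) (h : a n₀ ≠ 0) (T : ℝ) :
    ∃ t : ℝ, T ≤ t ∧ ‖a n₀‖ / 4 ≤ ‖f t‖ := by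
  by_contra hcon
  push_neg at hcon
  set A := ‖a n₀‖ with hA_def
  clear_value A
  have hA : 0 < A := hA_def ▸ norm_pos_iff.mpr h
  -- choose N
  have h1 : ∀ᶠ N in atTop, (∑' k, ‖a (k + N)‖) < A/4 :=
    (tendsto_sum_nat_add fun n => ‖a n‖).eventually (gt_mem_nhds (by positivity))
  obtain ⟨N, hN1, hN2⟩ := (h1.and (eventually_gt_atTop n₀)).exists
  set α := γ n₀ with hα
  clear_value α
  -- summability of the terms
  have hsum : ∀ t : ℝ, Summable fun n => a n * Complex.exp (Complex.I * γ n * t) := by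
    intro t
    apply Summable.of_norm
    refine ha.congr fun n => ?_
    rw [norm_mul, norm_exp_I_mul', mul_one]
  set g : ℝ → ℂ := fun t => ∑ n ∈ Finset.range N, a n * Complex.exp (Complex.I * γ n * t)
    with hg
  clear_value g
  have hfg : ∀ t : ℝ, ‖f t - g t‖ ≤ A/4 := by
    intro t
    have h2 := (hsum t).sum_add_tsum_nat_add N
    have h3 : f t - g t = ∑' k, a (k + N) * Complex.exp (Complex.I * γ (k + N) * t) := by
      rw [hf t, hg, ← h2]; ring
    rw [h3]
    have hsumtail : Summable fun k => ‖a (k + N) * Complex.exp (Complex.I * γ (k + N) * t)‖ := by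
      refine ((summable_nat_add_iff N).2 ha).congr fun n => ?_
      rw [norm_mul, norm_exp_I_mul', mul_one]
    calc ‖∑' k, a (k + N) * Complex.exp (Complex.I * γ (k + N) * t)‖
        ≤ ∑' k, ‖a (k + N) * Complex.exp (Complex.I * γ (k + N) * t)‖ :=
          norm_tsum_le_tsum_norm hsumtail
      _ = ∑' k, ‖a (k + N)‖ := by
          refine tsum_congr fun n => ?_
          rw [norm_mul, norm_exp_I_mul', mul_one]
      _ ≤ A/4 := hN1.le
  -- constants
  set C : ℝ := ∑ n ∈ (Finset.range N).erase n₀, 2 * ‖a n‖ / |γ n - α| with hC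
  clear_value C
  have hC0 : 0 ≤ C := hC ▸ Finset.sum_nonneg (fun n _ => by positivity)
  set L : ℝ := 4 * C / A + 1 with hLdef
  clear_value L
  have hL1 : 0 < L := by rw [hLdef]; positivity
  have hAL : A * L = 4*C + A := by
    rw [hLdef, mul_add, mul_one, mul_div_cancel₀ _ hA.ne']
  have hCL : C < A * L / 4 := by linarith
  -- the integral
  set c : ℕ → ℂ := fun n => Complex.I * ((γ n - α : ℝ) : ℂ) with hc
  clear_value c
  set F : ℝ → ℂ := fun t => ∑ n ∈ Finset.range N, a n * Complex.exp (c n * t) with hF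
  clear_value F
  have hcont : ∀ n, Continuous fun t : ℝ => Complex.exp (c n * t) := by
    intro n; fun_prop
  have hInt : ∀ n ∈ Finset.range N,
      IntervalIntegrable (fun t : ℝ => a n * Complex.exp (c n * t))
        MeasureTheory.volume T (T+L) := by
    intro n _
    exact (continuous_const.mul (hcont n)).intervalIntegrable _ _
  have hsplit : (∫ t in T..(T+L), F t) =
      ∑ n ∈ Finset.range N, a n * ∫ t in T..(T+L), Complex.exp (c n * t) := by
    rw [hF]
    rw [intervalIntegral.integral_finset_sum hInt]
    exact Finset.sum_congr rfl fun n _ => intervalIntegral.integral_const_mul _ _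
  -- value at n₀
  have hval0 : (∫ t in T..(T+L), Complex.exp (c n₀ * t)) = (L : ℂ) := by
    have hc0 : c n₀ = 0 := by simp [hc, hα]
    rw [hc0]
    simp
  -- bound for n ≠ n₀
  have hvaln : ∀ n ∈ (Finset.range N).erase n₀,
      ‖a n * ∫ t in T..(T+L), Complex.exp (c n * t)‖ ≤ 2 * ‖a n‖ / |γ n - α| := by
    intro n hn
    have hne : γ n - α ≠ 0 := by
      have hnn : n ≠ n₀ := Finset.ne_of_mem_erase hn
      intro hz
      exact hnn (hγ (by linarith [sub_eq_zero.mp hz]))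
    have hcne : c n ≠ 0 := by
      simp only [hc, mul_ne_zero_iff]
      exact ⟨Complex.I_ne_zero, by exact_mod_cast hne⟩
    rw [integral_exp_mul_complex hcne, norm_mul, norm_div]
    have hnormc : ‖c n‖ = |γ n - α| := by
      simp only [hc]
      rw [norm_mul, Complex.norm_I, one_mul,
        Complex.norm_real, Real.norm_eq_abs]
    have hexp : ∀ s : ℝ, ‖Complex.exp (c n * s)‖ = 1 := by
      intro s
      simp only [hc]
      rw [norm_exp_I_mul']
    have hnum : ‖Complex.exp (c n * ((T+L : ℝ) : ℂ)) - Complex.exp (c n * ((T : ℝ) : ℂ))‖ ≤ 2 := by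
      calc ‖Complex.exp (c n * ((T+L:ℝ):ℂ)) - Complex.exp (c n * ((T:ℝ):ℂ))‖
          ≤ ‖Complex.exp (c n * ((T+L:ℝ):ℂ))‖ + ‖Complex.exp (c n * ((T:ℝ):ℂ))‖ := norm_sub_le _ _
        _ = 2 := by rw [hexp, hexp]; norm_num
    have hpos : (0:ℝ) < |γ n - α| := abs_pos.mpr hne
    rw [hnormc]
    calc ‖a n‖ * (‖Complex.exp (c n * ((T+L:ℝ):ℂ)) - Complex.exp (c n * ((T:ℝ):ℂ))‖ / |γ n - α|)
        ≤ ‖a n‖ * (2 / |γ n - α|) := by gcongr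
      _ = 2 * ‖a n‖ / |γ n - α| := by ring
  -- split off the n₀ term
  set E : ℂ := ∑ n ∈ (Finset.range N).erase n₀, a n * ∫ t in T..(T+L), Complex.exp (c n * t)
    with hE
  clear_value E
  have hS : (∫ t in T..(T+L), F t) = a n₀ * (L : ℂ) + E := by
    rw [hsplit, ← Finset.add_sum_erase _ _ (Finset.mem_range.mpr hN2), hval0, hE]
  have hEle : ‖E‖ ≤ C := by
    rw [hE, hC]
    exact (norm_sum_le _ _).trans (Finset.sum_le_sum hvaln)
  have hlow : A * L - C ≤ ‖∫ t in T..(T+L), F t‖ := by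
    rw [hS]
    have h6 := norm_add_le (a n₀ * (L:ℂ) + E) (-E)
    simp only [add_neg_cancel_right, norm_neg] at h6
    have h5 : ‖a n₀ * (L:ℂ)‖ = A * L := by
      rw [norm_mul, ← hA_def, Complex.norm_real, Real.norm_eq_abs, abs_of_pos hL1]
    linarith
  -- pointwise upper bound
  have hFt : ∀ t : ℝ, ‖F t‖ = ‖g t‖ := by
    intro t
    have hFe : F t = g t * Complex.exp (Complex.I * ((-α : ℝ):ℂ) * t) := by
      rw [hF, hg, Finset.sum_mul]
      refine Finset.sum_congr rfl fun n _ => ?_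
      have hcc : c n * (t:ℂ) = Complex.I * ((γ n : ℝ):ℂ) * t + Complex.I * ((-α : ℝ):ℂ) * t := by
        simp only [hc]; push_cast; ring
      rw [mul_assoc, ← Complex.exp_add, hcc]
    rw [hFe, norm_mul, norm_exp_I_mul', mul_one]
  have hup : ‖∫ t in T..(T+L), F t‖ ≤ A/2 * L := by
    have hb : ∀ x ∈ Set.uIoc T (T+L), ‖F x‖ ≤ A/2 := by
      intro x hx
      rw [Set.uIoc_of_le (by linarith)] at hx
      have hTx : T ≤ x := hx.1.le
      have h8 : ‖g x‖ ≤ ‖f x‖ + ‖f x - g x‖ := by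
        have h9 := norm_sub_le (f x) (f x - g x)
        simpa [sub_sub_cancel] using h9
      have h9 := hcon x hTx
      have h10 := hfg x
      rw [hFt x]
      linarith
    have h11 := intervalIntegral.norm_integral_le_of_norm_le_const hb
    have habs : |T + L - T| = L := by
      rw [add_sub_cancel_left, abs_of_pos hL1]
    rw [habs] at h11
    exact h11
  have h12 : A/2 * L = A*L/2 := by ring
  have h13 := hlow.trans hup
  linarith [mul_pos hA hL1]


/-- If some coefficient `a_{n₀}` of the absolutely convergent
trigonometric series `f(t) = ∑ aₙ e^{iγₙt}` is nonzero, then there is `δ > 0` such that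
`{t : |f(t)| ≥ δ}` is unbounded above; in particular there is a sequence `tₘ → ∞` with
`|f(tₘ)| ≥ δ` for all `m`. -/
theorem trig_series_nonzero_coeff_recurrence
    (a : ℕ → ℂ) (ha : Summable fun n => ‖a n‖)
    (γ : ℕ → ℝ) (hγ : Function.Injective γ)
    (f : ℝ → ℂ)
    (hf : ∀ t : ℝ, f t = ∑' n : ℕ, a n * Complex.exp (Complex.I * (γ n : ℂ) * (t : ℂ)))
    (n₀ : ℕ) (h : a n₀ ≠ 0) :
    ∃ δ : ℝ, 0 < δ ∧ (∀ T : ℝ, ∃ t : ℝ, T ≤ t ∧ δ ≤ ‖f t‖) ∧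
      ∃ u : ℕ → ℝ, Filter.Tendsto u Filter.atTop Filter.atTop ∧ ∀ m : ℕ, δ ≤ ‖f (u m)‖ := by
  have hA : 0 < ‖a n₀‖ := norm_pos_iff.mpr h
  have H : ∀ T : ℝ, ∃ t : ℝ, T ≤ t ∧ ‖a n₀‖/4 ≤ ‖f t‖ := key_step a ha γ hγ f hf n₀ h
  choose t ht1 ht2 using H
  refine ⟨‖a n₀‖/4, by positivity, fun T => ⟨t T, ht1 T, ht2 T⟩,
    fun m => t m, ?_, fun m => ht2 m⟩
  exact tendsto_atTop_mono (fun m => ht1 (m:ℝ)) tendsto_natCast_atTop_atTop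
end
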